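/- arXiv:2310.04634 — 7 statements merged into one kernel-verified Lean document; each statement's English description precedes it below -/
import Mathlib

section
/- For every finite nonempty poset P, the cube-width satisfies w*(P) ≤ h*(P)·w(P), where w(P) denotes the size of the largest antichain in P. -/
/-- The first `h + 1` layers of the cube `Q_n` (i.e. the subsets of `[n]` of
size at most `h`, ordered by inclusion) contain an induced copy of `P`. -/
def EmbedsLow (P : Type*) [PartialOrder P] (n h : ℕ) : Prop :=
  ∃ f : P → Finset (Fin n), Function.Injective f ∧ (∀ p, (f p).card ≤ h) ∧
    ∀ p q, p ≤ q ↔ f p ⊆ f q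

/-- The cube-height `h*(P)`: the least `h` such that for some `n` the subsets
of `[n]` of size at most `h` contain an induced copy of `P`. -/
noncomputable def cubeHeight (P : Type*) [PartialOrder P] : ℕ :=
  sInf {h | ∃ n, EmbedsLow P n h}

/-- The cube-width `w*(P)`: the least `w` such that the subsets of `[w]` of
size at most `h*(P)` contain an induced copy of `P`. -/
noncomputable def cubeWidth (P : Type*) [PartialOrder P] : ℕ :=
  sInf {w | EmbedsLow P w (cubeHeight P)}

/-- The width `w(P)` of a poset: the maximum size of an antichain in `P`. -/
noncomputable def posetWidth (P : Type*) [PartialOrder P] [Fintype P] : ℕ :=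
  sSup {s | ∃ A : Finset P, IsAntichain (· ≤ ·) (A : Set P) ∧ A.card = s}

lemma embedsLow_basic (P : Type*) [PartialOrder P] [Fintype P] :
    ∃ h n, EmbedsLow P n h := by
  classical
  obtain ⟨e⟩ := Fintype.truncEquivFin P |>.nonempty
  refine ⟨Fintype.card P, Fintype.card P,
    fun p => (Finset.univ.filter (· ≤ p)).image e, ?_, fun p => ?_, fun p q => ?_⟩
  · intro p q hpq
    have h1 : ∀ a b : P, (Finset.univ.filter (· ≤ a)).image e =
        (Finset.univ.filter (· ≤ b)).image e → a ≤ b := by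
      intro a b hab
      have : e a ∈ (Finset.univ.filter (· ≤ b)).image e := by
        rw [← hab]; exact Finset.mem_image_of_mem e (by simp)
      obtain ⟨c, hc, hce⟩ := Finset.mem_image.1 this
      rw [e.injective hce] at hc
      exact (Finset.mem_filter.1 hc).2
    exact le_antisymm (h1 _ _ hpq) (h1 _ _ hpq.symm)
  · exact (Finset.card_image_le).trans (Finset.card_filter_le _ _ |>.trans (by simp))
  · constructor
    · intro hpq
      exact Finset.image_subset_image (fun x hx => Finset.mem_filter.2
        ⟨Finset.mem_univ x, (Finset.mem_filter.1 hx).2.trans hpq⟩)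
    · intro hsub
      have : e p ∈ (Finset.univ.filter (· ≤ q)).image e :=
        hsub (Finset.mem_image_of_mem e (by simp))
      obtain ⟨c, hc, hce⟩ := Finset.mem_image.1 this
      rw [e.injective hce] at hc
      exact (Finset.mem_filter.1 hc).2


/-- For every finite nonempty poset `P`, `w*(P) ≤ h*(P)·w(P)`, where `w(P)`
is the size of the largest antichain in `P`. -/
theorem cubeWidth_le_cubeHeight_mul_width (P : Type*) [PartialOrder P] [Fintype P] [Nonempty P] :
    cubeWidth P ≤ cubeHeight P * posetWidth P := by
  classical
  set h := cubeHeight P with hh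
  -- get witness embedding at height h
  have hne : ∃ n, EmbedsLow P n h := by
    have hset : {x | ∃ n, EmbedsLow P n x}.Nonempty := by
      obtain ⟨h0, n0, he⟩ := embedsLow_basic P
      exact ⟨h0, n0, he⟩
    exact Nat.sInf_mem hset
  obtain ⟨n, f, hfinj, hfcard, hford⟩ := hne
  -- maximal elements
  set M : Finset P := Finset.univ.filter (fun p => IsMax p) with hM
  have hManti : IsAntichain (· ≤ ·) (M : Set P) := by
    intro a ha b hb hab hle
    have : IsMax a := (Finset.mem_filter.1 ha).2
    exact hab (le_antisymm hle (this hle))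
  -- bound on posetWidth set
  have hbdd : BddAbove {s | ∃ A : Finset P, IsAntichain (· ≤ ·) (A : Set P) ∧ A.card = s} := by
    refine ⟨Fintype.card P, ?_⟩
    rintro s ⟨A, _, rfl⟩
    exact Finset.card_le_univ A
  have hMw : M.card ≤ posetWidth P := le_csSup hbdd ⟨M, hManti, rfl⟩
  -- the union over maximal elements
  set U : Finset (Fin n) := M.biUnion f with hU
  have hsubU : ∀ p, f p ⊆ U := by
    intro p
    obtain ⟨m, hpm, hmax⟩ := Finite.exists_le_maximal (a := p) (p := fun _ => True) trivial
    have hmM : m ∈ M := Finset.mem_filter.2 ⟨Finset.mem_univ m,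
      fun b hb => hmax.2 trivial hb⟩
    exact ((hford p m).1 hpm).trans (Finset.subset_biUnion_of_mem f hmM)
  have hUcard : U.card ≤ h * posetWidth P := by
    calc U.card ≤ ∑ m ∈ M, (f m).card := Finset.card_biUnion_le
    _ ≤ ∑ _m ∈ M, h := Finset.sum_le_sum (fun m _ => hfcard m)
    _ = M.card * h := by rw [Finset.sum_const, smul_eq_mul]
    _ ≤ posetWidth P * h := Nat.mul_le_mul_right _ hMw
    _ = h * posetWidth P := Nat.mul_comm _ _
  -- embedding of U into Fin (h * posetWidth P)
  have hcard : Fintype.card {x : Fin n // x ∈ U} ≤ Fintype.card (Fin (h * posetWidth P)) := by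
    simpa [Fintype.card_coe] using hUcard
  obtain ⟨e⟩ := Function.Embedding.nonempty_of_card_le hcard
  -- new embedding
  set g : P → Finset (Fin (h * posetWidth P)) :=
    fun p => ((f p).subtype (fun x => x ∈ U)).map e with hg
  have hgsub : ∀ p q, f p ⊆ f q ↔ g p ⊆ g q := by
    intro p q
    constructor
    · intro hpq
      exact Finset.map_subset_map.2 (fun x hx => by
        simp only [Finset.mem_subtype] at hx ⊢
        exact hpq hx)
    · intro hpq x hx
      have hxU : x ∈ U := hsubU p hx
      have : (⟨x, hxU⟩ : {y : Fin n // y ∈ U}) ∈ (f q).subtype (fun y => y ∈ U) :=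
        Finset.map_subset_map.1 hpq (Finset.mem_subtype.2 hx)
      exact Finset.mem_subtype.1 this
  have hEmb : EmbedsLow P (h * posetWidth P) h := by
    refine ⟨g, ?_, fun p => ?_, fun p q => (hford p q).trans (hgsub p q)⟩
    · intro p q hpq
      have h1 : p ≤ q := (hford p q).2 ((hgsub p q).2 (le_of_eq hpq))
      have h2 : q ≤ p := (hford q p).2 ((hgsub q p).2 (le_of_eq hpq.symm))
      exact le_antisymm h1 h2
    · rw [hg]
      calc (((f p).subtype _).map e).card = ((f p).subtype (fun x => x ∈ U)).card :=
            Finset.card_map e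
        _ ≤ (f p).card := by
            rw [Finset.card_subtype]; exact Finset.card_filter_le _ _
        _ ≤ h := hfcard p
  exact Nat.sInf_le hEmb
end

section
/- For every finite nonempty poset P, the cube-width satisfies w*(P) ≤ |P|²/4 + 2. -/
section Aux

variable {P : Type*} [PartialOrder P]

/-- To build an `EmbedsLow` witness it suffices to check the cardinality bound and the
order-iff property; injectivity is automatic. -/
lemma embedsLow_of_iff {n h : ℕ} (f : P → Finset (Fin n))
    (hcard : ∀ p, (f p).card ≤ h) (hiff : ∀ p q, p ≤ q ↔ f p ⊆ f q) :
    EmbedsLow P n h := by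
  refine ⟨f, ?_, hcard, hiff⟩
  intro p q hpq
  exact le_antisymm ((hiff p q).2 (by rw [hpq])) ((hiff q p).2 (by rw [hpq]))

/-- If all images of an embedding lie in a finset `U` of size at most `w`, then the
embedding can be relabelled to use the ground set `Fin w`. -/
lemma embedsLow_shrink {n h w : ℕ} (f : P → Finset (Fin n))
    (hcard : ∀ p, (f p).card ≤ h) (hiff : ∀ p q, p ≤ q ↔ f p ⊆ f q)
    (U : Finset (Fin n)) (hsub : ∀ p, f p ⊆ U) (hw : U.card ≤ w) :
    EmbedsLow P w h := by
  classical
  obtain ⟨ψ⟩ : Nonempty ({x : Fin n // x ∈ U} ↪ Fin w) := by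
    refine Function.Embedding.nonempty_of_card_le ?_
    simpa [Fintype.card_coe] using hw
  refine embedsLow_of_iff (fun p => ((f p).subtype (· ∈ U)).map ψ) ?_ ?_
  · intro p
    refine le_trans ?_ (hcard p)
    rw [Finset.card_map, Finset.card_subtype]
    exact Finset.card_le_card (Finset.filter_subset _ _)
  · intro p q
    rw [hiff p q, Finset.map_subset_map]
    constructor
    · intro hpq x hx
      rw [Finset.mem_subtype] at hx ⊢
      exact hpq hx
    · intro hst a ha
      have h1 : (⟨a, hsub p ha⟩ : {x : Fin n // x ∈ U}) ∈ (f p).subtype (· ∈ U) :=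
        Finset.mem_subtype.2 ha
      simpa using Finset.mem_subtype.1 (hst h1)

/-- The tagged-downset construction: map each non-maximal element to its (principal) down-set
inside the non-maximal elements, and each maximal element to its strict down-set together with
a private tag.  This embeds `P` into the cube on `|P|` points with all sets of size at most
`d + 1`, where `d` is the number of non-maximal elements. -/
lemma embedsLow_tagged [Fintype P] (D : Finset P) (hD : ∀ p : P, p ∈ D ↔ ¬ IsMax p) :
    EmbedsLow P (Fintype.card P) (D.card + 1) := by
  classical
  set e := Fintype.equivFin P with he
  refine embedsLow_of_iff
      (fun p => (D.filter (· ≤ p)).image e ∪ (if IsMax p then {e p} else ∅)) ?_ ?_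
  · intro p
    refine le_trans (Finset.card_union_le _ _) ?_
    have h1 : ((D.filter (· ≤ p)).image e).card ≤ D.card :=
      le_trans Finset.card_image_le (Finset.card_le_card (Finset.filter_subset _ _))
    have h2 : (if IsMax p then ({e p} : Finset (Fin (Fintype.card P))) else ∅).card ≤ 1 := by
      split <;> simp
    omega
  · intro p q
    constructor
    · intro hpq x hx
      rcases Finset.mem_union.1 hx with hx | hx
      · obtain ⟨y, hy, rfl⟩ := Finset.mem_image.1 hx
        rw [Finset.mem_filter] at hy
        exact Finset.mem_union_left _
          (Finset.mem_image.2 ⟨y, Finset.mem_filter.2 ⟨hy.1, hy.2.trans hpq⟩, rfl⟩)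
      · by_cases hp : IsMax p
        · have hqp : q = p := le_antisymm (hp hpq) hpq
          subst hqp
          exact Finset.mem_union_right _ hx
        · simp [hp] at hx
    · intro hsub
      by_cases hp : IsMax p
      · have hxp : e p ∈ (D.filter (· ≤ p)).image e ∪ (if IsMax p then {e p} else ∅) := by
          rw [if_pos hp]
          exact Finset.mem_union_right _ (Finset.mem_singleton_self _)
        have h2 := hsub hxp
        rcases Finset.mem_union.1 h2 with h2 | h2
        · obtain ⟨y, hy, hye⟩ := Finset.mem_image.1 h2
          have hyp : y = p := e.injective hye
          rw [Finset.mem_filter, hD] at hy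
          exact absurd hp (hyp ▸ hy.1)
        · by_cases hq : IsMax q
          · rw [if_pos hq, Finset.mem_singleton] at h2
            have : p = q := e.injective h2
            exact this.le
          · simp [hq] at h2
      · have hxp : e p ∈ (D.filter (· ≤ p)).image e ∪ (if IsMax p then {e p} else ∅) :=
          Finset.mem_union_left _
            (Finset.mem_image.2 ⟨p, Finset.mem_filter.2 ⟨(hD p).2 hp, le_refl p⟩, rfl⟩)
        have h2 := hsub hxp
        rcases Finset.mem_union.1 h2 with h2 | h2
        · obtain ⟨y, hy, hye⟩ := Finset.mem_image.1 h2
          have hyp : y = p := e.injective hye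
          rw [Finset.mem_filter] at hy
          exact hyp ▸ hy.2
        · by_cases hq : IsMax q
          · rw [if_pos hq, Finset.mem_singleton] at h2
            exact (e.injective h2).le
          · simp [hq] at h2

end Aux

/-- For every finite nonempty poset `P`, `w*(P) ≤ |P|²/4 + 2`. -/
theorem cubeWidth_le_card_sq_div_four (P : Type*) [PartialOrder P] [Fintype P] [Nonempty P] :
    (cubeWidth P : ℝ) ≤ (Fintype.card P : ℝ) ^ 2 / 4 + 2 := by
  classical
  set m := Fintype.card P with hm
  set D : Finset P := Finset.univ.filter (fun p : P => ¬ IsMax p) with hDdef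
  have hD : ∀ p : P, p ∈ D ↔ ¬ IsMax p := by
    intro p; simp [hDdef]
  set M : Finset P := Dᶜ with hMdef
  have hMmem : ∀ p : P, p ∈ M ↔ IsMax p := by
    intro p
    simp only [hMdef, Finset.mem_compl, hD p, not_not]
  set d := D.card with hd
  set t := M.card with ht
  have htd : t + d = m := by
    have h1 : t = m - d := by rw [ht, hMdef, Finset.card_compl, hm, hd]
    have h2 : d ≤ m := by rw [hd, hm]; exact Finset.card_le_univ D
    omega
  -- Lemma B : the tagged construction
  have hB : EmbedsLow P m (d + 1) := embedsLow_tagged D hD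
  -- the height is attained
  have hne : {h | ∃ n, EmbedsLow P n h}.Nonempty := ⟨d + 1, m, hB⟩
  obtain ⟨n, f, hinj, hcard, hiff⟩ : ∃ n, EmbedsLow P n (cubeHeight P) := Nat.sInf_mem hne
  set h := cubeHeight P with hh
  have hh_le : h ≤ d + 1 := Nat.sInf_le ⟨m, hB⟩
  -- Lemma A : width at most t * h
  have hA : EmbedsLow P (t * h) h := by
    refine embedsLow_shrink f hcard hiff (M.biUnion f) ?_ ?_
    · intro p
      obtain ⟨q, hpq, hqmax⟩ :=
        Finite.exists_le_maximal (p := fun _ : P => True) (a := p) trivial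
      have hqM : q ∈ M := (hMmem q).2 (fun c hc => hqmax.2 trivial hc)
      exact le_trans ((hiff p q).1 hpq) (Finset.subset_biUnion_of_mem f hqM)
    · refine le_trans Finset.card_biUnion_le ?_
      have := Finset.sum_le_card_nsmul M (fun q => (f q).card) h (fun q _ => hcard q)
      simpa [smul_eq_mul, ht] using this
  have hw1 : cubeWidth P ≤ t * h := Nat.sInf_le hA
  by_cases hcase : h ≤ d
  · -- width ≤ t*h ≤ t*d ≤ m²/4
    have hwn : cubeWidth P ≤ t * d := le_trans hw1 (Nat.mul_le_mul_left t hcase)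
    have hr : (cubeWidth P : ℝ) ≤ (t : ℝ) * (d : ℝ) := by exact_mod_cast hwn
    have hmr : (m : ℝ) = (t : ℝ) + (d : ℝ) := by exact_mod_cast htd.symm
    rw [hmr]
    nlinarith [sq_nonneg ((t : ℝ) - (d : ℝ)), hr]
  · -- h = d + 1, so the tagged construction has height exactly h and width m
    have hhd : h = d + 1 := le_antisymm hh_le (by omega)
    have hw2 : cubeWidth P ≤ m := Nat.sInf_le (show EmbedsLow P m h from hhd ▸ hB)
    have hr : (cubeWidth P : ℝ) ≤ (m : ℝ) := by exact_mod_cast hw2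
    nlinarith [sq_nonneg ((m : ℝ) - 2), hr]
end

section
/- Let n ≥ 2 and let F be a family of subsets of [n] such that for every i ∈ [n] there exist sets A, B ∈ F with A \ B = {i}. Then |F| ≥ 2·√(n − 2). -/
open Finset

section Walks

variable {α : Type*} {r : α → α → Prop}

private lemma rtgOfWalk (f : ℕ → α) :
    ∀ (k : ℕ), (∀ t < k, r (f t) (f (t + 1))) → Relation.ReflTransGen r (f 0) (f k) := by
  intro k
  induction k with
  | zero => intro _; exact .refl
  | succ k ih =>
    intro h
    exact .tail (ih fun t ht => h t (ht.trans (Nat.lt_succ_self k))) (h k (Nat.lt_succ_self k))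

private lemma tgExistsWalk {a b : α} (h : Relation.TransGen r a b) :
    ∃ (k : ℕ) (f : ℕ → α), 0 < k ∧ f 0 = a ∧ f k = b ∧ ∀ t < k, r (f t) (f (t + 1)) := by
  induction h with
  | @single c hac =>
    refine ⟨1, fun t => if t = 0 then a else c, Nat.one_pos, by simp, by simp, ?_⟩
    intro t ht
    interval_cases t
    simpa using hac
  | @tail c d hac hcd ih =>
    obtain ⟨k, f, hk, hf0, hfk, harc⟩ := ih
    refine ⟨k + 1, fun t => if t ≤ k then f t else d, Nat.succ_pos k, by simpa using hf0,
      by simp, ?_⟩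
    intro t ht
    rcases Nat.lt_succ_iff_lt_or_eq.mp ht with h1 | h1
    · show r (if t ≤ k then f t else d) (if t + 1 ≤ k then f (t + 1) else d)
      rw [if_pos h1.le, if_pos (Nat.succ_le_of_lt h1)]
      exact harc t h1
    · subst h1
      show r (if t ≤ t then f t else d) (if t + 1 ≤ t then f (t + 1) else d)
      rw [if_pos le_rfl, if_neg (by omega), hfk]
      exact hcd

end Walks

variable {α : Type*} [DecidableEq α]

private lemma dag_case (V : Finset α) (E : Finset (α × α))
    (hend : ∀ e ∈ E, e.1 ∈ V ∧ e.2 ∈ V ∧ e.1 ≠ e.2)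
    (hP : ∀ e ∈ E, ¬ Relation.TransGen (fun a b => (a, b) ∈ E.erase e) e.1 e.2)
    (hacyc : ¬ ∃ x, Relation.TransGen (fun a b => (a, b) ∈ E) x x) :
    E.card ≤ V.card ^ 2 / 4 := by
  classical
  set m := V.card with hm
  set d : α → ℕ := fun x => (E.filter (fun e => e.1 = x ∨ e.2 = x)).card with hd
  have h2c : ∀ {u v : α}, (u, v) ∈ E → (v, u) ∈ E → False := by
    intro u v h1 h2
    exact hacyc ⟨u, .tail (.single h1) h2⟩
  -- no arc is a loop
  have hne : ∀ {u v : α}, (u, v) ∈ E → u ≠ v := fun h => (hend _ h).2.2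
  -- key degree bound
  have key : ∀ e ∈ E, d e.1 + d e.2 ≤ m := by
    rintro ⟨u, v⟩ he
    obtain ⟨hu, hv, huv⟩ := hend _ he
    simp only at hu hv huv ⊢
    -- the incident-arc set
    set I : Finset (α × α) := E.filter (fun e => (e.1 = u ∨ e.2 = u) ∨ (e.1 = v ∨ e.2 = v))
      with hI
    have hIme : (u, v) ∈ I := by
      rw [hI, mem_filter]; exact ⟨he, by simp⟩
    -- "other" endpoint map
    set other : α × α → α := fun e => if e.1 = u ∨ e.1 = v then e.2 else e.1 with hother
    -- shape analysis for incident arcs other than (u,v)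
    have shape : ∀ e' ∈ I.erase (u, v),
        (e' = (u, other e') ∨ e' = (v, other e') ∨ e' = (other e', u) ∨ e' = (other e', v))
          ∧ other e' ≠ u ∧ other e' ≠ v ∧ other e' ∈ V := by
      rintro ⟨a, b⟩ he'
      obtain ⟨hne', hmem⟩ := mem_erase.mp he'
      obtain ⟨haE, hcond⟩ := mem_filter.mp hmem
      obtain ⟨haV, hbV, hab⟩ := hend _ haE
      simp only at haV hbV hab hcond hne' ⊢
      by_cases hA : a = u ∨ a = v
      · have hob : other (a, b) = b := by rw [hother]; simp [hA]
        rcases hA with h | h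
        · -- arc (u, b)
          have hbu : b ≠ u := fun hh => hab (h.trans hh.symm)
          have hbv : b ≠ v := fun hh => hne' (by rw [h, hh])
          rw [hob]
          exact ⟨Or.inl (by rw [h]), hbu, hbv, hbV⟩
        · -- arc (v, b)
          have hbv : b ≠ v := fun hh => hab (h.trans hh.symm)
          have hbu : b ≠ u := fun hh => h2c he (by rw [← h, ← hh]; exact haE)
          rw [hob]
          exact ⟨Or.inr (Or.inl (by rw [h])), hbu, hbv, hbV⟩
      · have hob : other (a, b) = a := by rw [hother]; simp [hA]
        push_neg at hA
        have hB : b = u ∨ b = v := by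
          rcases hcond with (h | h) | (h | h)
          · exact absurd (Or.inl h) (by push_neg; exact hA)
          · exact Or.inl h
          · exact absurd (Or.inr h) (by push_neg; exact hA)
          · exact Or.inr h
        rw [hob]
        rcases hB with rfl | rfl
        · exact ⟨Or.inr (Or.inr (Or.inl rfl)), hA.1, hA.2, haV⟩
        · exact ⟨Or.inr (Or.inr (Or.inr rfl)), hA.1, hA.2, haV⟩
    -- injectivity of `other` on I.erase (u,v)
    have hinjOn : Set.InjOn other (I.erase (u, v) : Finset (α × α)) := by
      intro e1 he1 e2 he2 heq
      obtain ⟨hs1, hw1u, hw1v, -⟩ := shape e1 (by exact_mod_cast he1)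
      obtain ⟨hs2, hw2u, hw2v, -⟩ := shape e2 (by exact_mod_cast he2)
      obtain ⟨w, hw⟩ : ∃ w, other e1 = w := ⟨_, rfl⟩
      rw [← heq, hw] at hs2
      rw [hw] at hs1 hw1u hw1v
      have he1E : e1 ∈ E := (mem_filter.mp (mem_of_mem_erase (by exact_mod_cast he1))).1
      have he2E : e2 ∈ E := (mem_filter.mp (mem_of_mem_erase (by exact_mod_cast he2))).1
      by_contra hne12
      have n1 : ((u, v) : α × α) ≠ (u, w) := fun hh => hw1v (congrArg Prod.snd hh).symm
      have n2 : ((v, w) : α × α) ≠ (u, w) := fun hh => huv (congrArg Prod.fst hh).symm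
      have n3 : ((u, w) : α × α) ≠ (u, v) := fun hh => hw1v (congrArg Prod.snd hh)
      have n4 : ((w, v) : α × α) ≠ (u, v) := fun hh => hw1u (congrArg Prod.fst hh)
      have n5 : ((w, u) : α × α) ≠ (w, v) := fun hh => huv (congrArg Prod.snd hh)
      have n6 : ((u, v) : α × α) ≠ (w, v) := fun hh => hw1u (congrArg Prod.fst hh).symm
      rcases hs1 with rfl | rfl | rfl | rfl <;> rcases hs2 with h2 | h2 | h2 | h2 <;>
        rw [h2] at he2E hne12
      -- (u,w) vs (u,w)
      · exact hne12 rfl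
      -- (u,w) vs (v,w) : path u → v → w kills (u,w)
      · exact hP (u, w) he1E (Relation.TransGen.tail (b := v)
          (.single (mem_erase.mpr ⟨n1, he⟩)) (mem_erase.mpr ⟨n2, he2E⟩))
      -- (u,w) vs (w,u) : 2-cycle
      · exact h2c he1E he2E
      -- (u,w) vs (w,v) : path u → w → v kills (u,v)
      · exact hP (u, v) he (Relation.TransGen.tail (b := w)
          (.single (mem_erase.mpr ⟨n3, he1E⟩)) (mem_erase.mpr ⟨n4, he2E⟩))
      -- (v,w) vs (u,w) : path u → v → w kills (u,w)
      · exact hP (u, w) he2E (Relation.TransGen.tail (b := v)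
          (.single (mem_erase.mpr ⟨n1, he⟩)) (mem_erase.mpr ⟨n2, he1E⟩))
      -- (v,w) vs (v,w)
      · exact hne12 rfl
      -- (v,w) vs (w,u) : cycle u → v → w → u
      · exact hacyc ⟨u, Relation.TransGen.tail (b := w)
          (Relation.TransGen.tail (b := v) (.single he) he1E) he2E⟩
      -- (v,w) vs (w,v) : 2-cycle
      · exact h2c he1E he2E
      -- (w,u) vs (u,w) : 2-cycle
      · exact h2c he1E he2E
      -- (w,u) vs (v,w) : cycle u → v → w → u
      · exact hacyc ⟨u, Relation.TransGen.tail (b := w)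
          (Relation.TransGen.tail (b := v) (.single he) he2E) he1E⟩
      -- (w,u) vs (w,u)
      · exact hne12 rfl
      -- (w,u) vs (w,v) : path w → u → v kills (w,v)
      · exact hP (w, v) he2E (Relation.TransGen.tail (b := u)
          (.single (mem_erase.mpr ⟨n5, he1E⟩)) (mem_erase.mpr ⟨n6, he⟩))
      -- (w,v) vs (u,w) : path u → w → v kills (u,v)
      · exact hP (u, v) he (Relation.TransGen.tail (b := w)
          (.single (mem_erase.mpr ⟨n3, he2E⟩)) (mem_erase.mpr ⟨n4, he1E⟩))
      -- (w,v) vs (v,w) : 2-cycle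
      · exact h2c he1E he2E
      -- (w,v) vs (w,u) : path w → u → v kills (w,v)
      · exact hP (w, v) he1E (Relation.TransGen.tail (b := u)
          (.single (mem_erase.mpr ⟨n5, he2E⟩)) (mem_erase.mpr ⟨n6, he⟩))
      -- (w,v) vs (w,v)
      · exact hne12 rfl
    -- cardinality chain
    have hsub : V \ {u, v} ⊆ V := sdiff_subset
    have hcard1 : (I.erase (u, v)).card ≤ (V \ {u, v}).card := by
      apply Finset.card_le_card_of_injOn other _ hinjOn
      intro e' he'
      obtain ⟨-, hwu, hwv, hwV⟩ := shape e' he'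
      rw [mem_coe, mem_sdiff]
      exact ⟨hwV, by simp [hwu, hwv]⟩
    have hpair : ({u, v} : Finset α) ⊆ V := by
      intro x hx
      rcases mem_insert.mp hx with rfl | hx
      · exact hu
      · rw [mem_singleton.mp hx]; exact hv
    have hcardV : (V \ {u, v}).card = m - 2 := by
      rw [card_sdiff_of_subset hpair, card_pair huv]
    have hIcard : I.card ≤ m - 1 := by
      have := Finset.card_erase_add_one hIme
      have hm2 : 2 ≤ m := by
        calc 2 = ({u, v} : Finset α).card := (card_pair huv).symm
          _ ≤ V.card := card_le_card hpair
      omega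
    -- d u + d v = |union| + |inter|
    have hunion : E.filter (fun e => e.1 = u ∨ e.2 = u) ∪ E.filter (fun e => e.1 = v ∨ e.2 = v)
        = I := by rw [hI, ← filter_or]
    have hinter : E.filter (fun e => e.1 = u ∨ e.2 = u) ∩ E.filter (fun e => e.1 = v ∨ e.2 = v)
        ⊆ {(u, v)} := by
      intro e' he'
      obtain ⟨h1, h2⟩ := mem_inter.mp he'
      obtain ⟨heE, hc1⟩ := mem_filter.mp h1
      obtain ⟨-, hc2⟩ := mem_filter.mp h2
      obtain ⟨a, b⟩ := e'
      obtain ⟨-, -, hab⟩ := hend _ heE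
      simp only at hc1 hc2 hab ⊢
      rcases hc1 with h1 | h1 <;> rcases hc2 with hh2 | hh2
      · exact absurd (h1.symm.trans hh2) huv
      · exact mem_singleton.mpr (by rw [h1, hh2])
      · exact (h2c he (by rw [← hh2, ← h1]; exact heE)).elim
      · exact absurd (h1.symm.trans hh2) huv
    have hdu : d u = (E.filter (fun e => e.1 = u ∨ e.2 = u)).card := rfl
    have hdv : d v = (E.filter (fun e => e.1 = v ∨ e.2 = v)).card := rfl
    have hcai := Finset.card_union_add_card_inter (E.filter (fun e => e.1 = u ∨ e.2 = u))
      (E.filter (fun e => e.1 = v ∨ e.2 = v))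
    rw [hunion] at hcai
    have hi1 : (E.filter (fun e => e.1 = u ∨ e.2 = u) ∩
        E.filter (fun e => e.1 = v ∨ e.2 = v)).card ≤ 1 := by
      calc _ ≤ ({(u,v)} : Finset (α × α)).card := card_le_card hinter
        _ = 1 := card_singleton _
    have hm1 : 0 < m := hm ▸ Finset.card_pos.mpr ⟨u, hu⟩
    show d u + d v ≤ m
    calc d u + d v
        = I.card + (E.filter (fun e => e.1 = u ∨ e.2 = u) ∩
            E.filter (fun e => e.1 = v ∨ e.2 = v)).card := by rw [hdu, hdv, ← hcai]
      _ ≤ (m - 1) + 1 := Nat.add_le_add hIcard hi1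
      _ ≤ m := by omega
  -- sum of degrees = 2|E|
  have sum_d : ∑ x ∈ V, d x = 2 * E.card := by
    have : ∀ x, d x = ∑ e ∈ E, if e.1 = x ∨ e.2 = x then 1 else 0 := by
      intro x; rw [hd]; exact card_filter _ _
    rw [Finset.sum_congr rfl (fun x _ => this x), Finset.sum_comm]
    have inner : ∀ e ∈ E, (∑ x ∈ V, if e.1 = x ∨ e.2 = x then 1 else 0) = 2 := by
      intro e he
      obtain ⟨h1, h2, h3⟩ := hend _ he
      rw [← card_filter]
      have : V.filter (fun x => e.1 = x ∨ e.2 = x) = {e.1, e.2} := by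
        ext x
        simp only [mem_filter, mem_insert, mem_singleton]
        constructor
        · rintro ⟨-, rfl | rfl⟩
          · exact Or.inl rfl
          · exact Or.inr rfl
        · rintro (rfl | rfl)
          · exact ⟨h1, Or.inl rfl⟩
          · exact ⟨h2, Or.inr rfl⟩
      rw [this, card_pair h3]
    rw [Finset.sum_congr rfl inner, Finset.sum_const, smul_eq_mul, mul_comm]
  -- sum over arcs of endpoint degrees = sum of degree squares
  have sum_sq : ∑ e ∈ E, (d e.1 + d e.2) = ∑ x ∈ V, d x ^ 2 := by
    have step1 : ∀ e ∈ E, d e.1 + d e.2 = ∑ x ∈ V, if e.1 = x ∨ e.2 = x then d x else 0 := by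
      intro e he
      obtain ⟨h1, h2, h3⟩ := hend _ he
      rw [← Finset.sum_filter]
      have : V.filter (fun x => e.1 = x ∨ e.2 = x) = {e.1, e.2} := by
        ext x
        simp only [mem_filter, mem_insert, mem_singleton]
        constructor
        · rintro ⟨-, rfl | rfl⟩
          · exact Or.inl rfl
          · exact Or.inr rfl
        · rintro (rfl | rfl)
          · exact ⟨h1, Or.inl rfl⟩
          · exact ⟨h2, Or.inr rfl⟩
      rw [this, Finset.sum_pair h3]
    rw [Finset.sum_congr rfl step1, Finset.sum_comm]
    apply Finset.sum_congr rfl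
    intro x _
    rw [← Finset.sum_filter, Finset.sum_const, smul_eq_mul]
    have : (E.filter (fun e => e.1 = x ∨ e.2 = x)).card = d x := rfl
    rw [this, sq]
  -- Cauchy-Schwarz
  have cs : (∑ x ∈ V, d x) ^ 2 ≤ m * ∑ x ∈ V, d x ^ 2 := by
    have := sq_sum_le_card_mul_sum_sq (s := V) (f := fun x => (d x : ℤ))
    have h2 : ((∑ x ∈ V, d x : ℕ) : ℤ) ^ 2 ≤ (m : ℤ) * ((∑ x ∈ V, d x ^ 2 : ℕ) : ℤ) := by
      push_cast
      exact_mod_cast this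
    exact_mod_cast h2
  have hsum_bound : ∑ e ∈ E, (d e.1 + d e.2) ≤ E.card * m := by
    calc ∑ e ∈ E, (d e.1 + d e.2) ≤ ∑ _e ∈ E, m := Finset.sum_le_sum key
      _ = E.card * m := by rw [Finset.sum_const, smul_eq_mul]
  -- combine
  have final : 4 * E.card * E.card ≤ E.card * (m * m) := by
    have h1 : (2 * E.card) ^ 2 ≤ m * (E.card * m) := by
      rw [← sum_d]
      calc (∑ x ∈ V, d x) ^ 2 ≤ m * ∑ x ∈ V, d x ^ 2 := cs
        _ = m * ∑ e ∈ E, (d e.1 + d e.2) := by rw [sum_sq]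
        _ ≤ m * (E.card * m) := Nat.mul_le_mul_left m hsum_bound
    nlinarith
  rcases Nat.eq_zero_or_pos E.card with h0 | h0
  · rw [h0]; exact Nat.zero_le _
  have h4 : E.card * 4 ≤ m ^ 2 := by
    have := Nat.le_of_mul_le_mul_left (by linarith [final] : E.card * (4 * E.card) ≤ E.card * (m * m)) h0
    nlinarith
  exact (Nat.le_div_iff_mul_le (by norm_num)).mpr h4

private lemma digraph_card_bound :
    ∀ (m : ℕ) (V : Finset α) (E : Finset (α × α)), V.card = m →
      (∀ e ∈ E, e.1 ∈ V ∧ e.2 ∈ V ∧ e.1 ≠ e.2) →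
      (∀ e ∈ E, ¬ Relation.TransGen (fun a b => (a, b) ∈ E.erase e) e.1 e.2) →
      E.card ≤ max (2 * m - 2) (m ^ 2 / 4) := by
  intro m
  induction m using Nat.strong_induction_on with
  | _ m IH =>
  intro V E hm hend hP
  by_cases hcyc : ∃ x, Relation.TransGen (fun a b => (a, b) ∈ E) x x
  swap
  · exact le_max_of_le_right (hm ▸ dag_case V E hend hP hcyc)
  -- CYCLE CASE
  obtain ⟨x, hx⟩ := hcyc
  obtain ⟨k1, f1, hk1, hf10, hf1k, harc1⟩ := tgExistsWalk hx
  set Cyc : ℕ → Prop := fun k => 0 < k ∧ ∃ f : ℕ → α, f 0 = f k ∧ ∀ t < k, (f t, f (t + 1)) ∈ E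
    with hCyc
  have hCne : Cyc k1 := ⟨hk1, f1, by rw [hf10, hf1k], harc1⟩
  set K := sInf {k | Cyc k} with hKdef
  have hKC : Cyc K := by
    have h : K ∈ {k | Cyc k} := Nat.sInf_mem (⟨k1, hCne⟩ : {k | Cyc k}.Nonempty)
    exact h
  have hKmin : ∀ j, j < K → ¬ Cyc j := fun j hj hC => Nat.notMem_of_lt_sInf hj hC
  obtain ⟨hK0, f, hf0, harc⟩ := hKC
  have hK2 : 2 ≤ K := by
    rcases Nat.lt_or_ge K 2 with h | h
    · exfalso
      have hK1 : K = 1 := by omega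
      have harc0 := harc 0 (by omega)
      have hne01 := (hend _ harc0).2.2
      rw [hK1] at hf0
      exact hne01 hf0
    · exact h
  -- extended (periodic) walk arcs
  have hmod1 : (1 : ℕ) % K = 1 := Nat.mod_eq_of_lt (by omega)
  have harc' : ∀ t, (f (t % K), f ((t + 1) % K)) ∈ E := by
    intro t
    have h1 : t % K < K := Nat.mod_lt _ (by omega)
    rcases Nat.lt_or_ge (t % K + 1) K with h | h
    · have he : (t + 1) % K = t % K + 1 := by
        rw [Nat.add_mod, hmod1, Nat.mod_eq_of_lt h]
      rw [he]
      exact harc _ h1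
    · have hKe : t % K = K - 1 := by omega
      have he : (t + 1) % K = 0 := by
        rw [Nat.add_mod, hmod1, hKe]
        have : K - 1 + 1 = K := by omega
        rw [this, Nat.mod_self]
      rw [he, hKe, hf0]
      have : K - 1 + 1 = K := by omega
      rw [← this]
      exact harc (K - 1) (by omega)
  -- f is injective on [0, K)
  have hinj : ∀ a b, a < b → b < K → f a ≠ f b := by
    intro a b hab hbK heq
    have hC : Cyc (K - (b - a)) := by
      refine ⟨by omega, fun t => if t ≤ a then f t else f (t + (b - a)), ?_, ?_⟩
      · show (if (0:ℕ) ≤ a then f 0 else f (0 + (b - a)))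
            = (if K - (b - a) ≤ a then f (K - (b - a)) else f (K - (b - a) + (b - a)))
        rw [if_pos (Nat.zero_le a), if_neg (by omega)]
        have hh : K - (b - a) + (b - a) = K := by omega
        rw [hh, hf0]
      · intro t ht
        show ((if t ≤ a then f t else f (t + (b - a))),
          (if t + 1 ≤ a then f (t + 1) else f (t + 1 + (b - a)))) ∈ E
        rcases Nat.lt_or_ge t a with h | h
        · rw [if_pos h.le, if_pos (Nat.succ_le_of_lt h)]
          exact harc t (by omega)
        rcases Nat.eq_or_lt_of_le h with h' | h'
        · rw [if_pos (le_of_eq h'.symm), if_neg (by omega), ← h', heq]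
          have hh : a + 1 + (b - a) = b + 1 := by omega
          rw [hh]
          exact harc b hbK
        · rw [if_neg (by omega), if_neg (by omega)]
          have hh : t + 1 + (b - a) = t + (b - a) + 1 := by omega
          rw [hh]
          exact harc (t + (b - a)) (by omega)
    exact hKmin _ (by omega) hC
  -- the cycle vertex set and arc set
  set S : Finset α := (Finset.range K).image f with hS
  set CA : Finset (α × α) := (Finset.range K).image (fun t => (f t, f (t + 1))) with hCA
  have hfS : ∀ t, t < K → f t ∈ S := fun t ht => mem_image.mpr ⟨t, mem_range.mpr ht, rfl⟩
  have hrepS : f 0 ∈ S := hfS 0 (by omega)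
  have hSV : S ⊆ V := by
    intro y hy
    obtain ⟨t, ht, rfl⟩ := mem_image.mp hy
    rw [mem_range] at ht
    exact (hend _ (harc t ht)).1
  have hScard : S.card = K := by
    rw [hS, Finset.card_image_of_injOn, card_range]
    intro a ha b hb hab
    rw [mem_coe, mem_range] at ha hb
    by_contra hne
    rcases Nat.lt_or_ge a b with h | h
    · exact hinj a b h hb hab
    · exact hinj b a (by omega) ha hab.symm
  have hCAsub : CA ⊆ E := by
    intro e he
    obtain ⟨t, ht, rfl⟩ := mem_image.mp he
    rw [mem_range] at ht
    exact harc t ht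
  have hCAcard : CA.card = K := by
    rw [hCA, Finset.card_image_of_injOn, card_range]
    intro a ha b hb hab
    rw [mem_coe, mem_range] at ha hb
    by_contra hne
    have h1 : f a = f b := congrArg Prod.fst hab
    rcases Nat.lt_or_ge a b with h | h
    · exact hinj a b h hb h1
    · exact hinj b a (by omega) ha h1.symm
  have hCAmem : ∀ t, (f (t % K), f ((t + 1) % K)) ∈ CA := by
    intro t
    have h1 : t % K < K := Nat.mod_lt _ (by omega)
    rcases Nat.lt_or_ge (t % K + 1) K with h | h
    · have he : (t + 1) % K = t % K + 1 := by
        rw [Nat.add_mod, hmod1, Nat.mod_eq_of_lt h]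
      rw [he]
      exact mem_image.mpr ⟨t % K, mem_range.mpr h1, rfl⟩
    · have hKe : t % K = K - 1 := by omega
      have he : (t + 1) % K = 0 := by
        rw [Nat.add_mod, hmod1, hKe]
        have : K - 1 + 1 = K := by omega
        rw [this, Nat.mod_self]
      rw [he, hKe, hf0]
      refine mem_image.mpr ⟨K - 1, mem_range.mpr (by omega), ?_⟩
      have : K - 1 + 1 = K := by omega
      rw [this]
  -- (A) every arc of E inside S is a cycle arc
  have hintra : ∀ e ∈ E, e.1 ∈ S → e.2 ∈ S → e ∈ CA := by
    rintro ⟨p, q⟩ he hp hq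
    obtain ⟨a, haK, hap⟩ := mem_image.mp hp
    obtain ⟨b, hbK, hbq⟩ := mem_image.mp hq
    rw [mem_range] at haK hbK
    subst hap; subst hbq
    by_contra hnot
    have hne' : f a ≠ f b := (hend _ he).2.2
    have hab : a ≠ b := fun h => hne' (by rw [h])
    -- excluded: b = a + 1 (mod K)
    have hnotsucc : ¬ (b = a + 1 ∨ (a = K - 1 ∧ b = 0)) := by
      rintro (rfl | ⟨ha', rfl⟩)
      · exact hnot (mem_image.mpr ⟨a, mem_range.mpr haK, rfl⟩)
      · refine hnot (mem_image.mpr ⟨K - 1, mem_range.mpr (by omega), ?_⟩)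
        have h1 : K - 1 + 1 = K := by omega
        rw [ha', h1, ← hf0]
    set L : ℕ := if b ≤ a then a - b else a + K - b with hL
    have hL1 : 1 ≤ L := by
      rw [hL]; split_ifs with h <;> omega
    have hLK : L + 1 < K := by
      rw [hL]; split_ifs with h
      · -- b < a (b ≠ a); bad only if a = K-1, b = 0
        rcases Nat.lt_or_ge (a - b) (K - 1) with h2 | h2
        · omega
        · exfalso
          exact hnotsucc (Or.inr ⟨by omega, by omega⟩)
      · -- a < b; bad only if b = a+1
        rcases Nat.lt_or_ge (a + 1) b with h2 | h2
        · omega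
        · exfalso
          exact hnotsucc (Or.inl (by omega))
    have hbL : (b + L) % K = a := by
      rw [hL]; split_ifs with h
      · have : b + (a - b) = a := by omega
        rw [this, Nat.mod_eq_of_lt haK]
      · have : b + (a + K - b) = a + K := by omega
        rw [this, Nat.add_mod_right, Nat.mod_eq_of_lt haK]
    have hC : Cyc (L + 1) := by
      refine ⟨by omega, fun t => if t ≤ L then f ((b + t) % K) else f b, ?_, ?_⟩
      · show (if (0:ℕ) ≤ L then f ((b + 0) % K) else f b)
            = (if L + 1 ≤ L then f ((b + (L + 1)) % K) else f b)
        rw [if_pos (Nat.zero_le L), if_neg (by omega)]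
        have h00 : (b + 0) % K = b := by
          rw [Nat.add_zero, Nat.mod_eq_of_lt hbK]
        rw [h00]
      · intro t ht
        show ((if t ≤ L then f ((b + t) % K) else f b),
          (if t + 1 ≤ L then f ((b + t + 1) % K) else f b)) ∈ E
        rcases Nat.lt_or_ge t L with h | h
        · rw [if_pos h.le, if_pos (Nat.succ_le_of_lt h)]
          exact harc' (b + t)
        · have htL : t = L := by omega
          rw [if_pos (le_of_eq htL), if_neg (by omega), htL, hbL]
          exact he
    exact hKmin _ hLK hC
  -- reach within S avoiding any non-cycle-arc
  have reach : ∀ (e0 : α × α), e0 ∉ CA → ∀ a ∈ S, ∀ b ∈ S,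
      Relation.ReflTransGen (fun x y => (x, y) ∈ E.erase e0) a b := by
    intro e0 he0 a ha b hb
    obtain ⟨i, hi, rfl⟩ := mem_image.mp ha
    obtain ⟨j, hj, rfl⟩ := mem_image.mp hb
    rw [mem_range] at hi hj
    set D : ℕ := if i ≤ j then j - i else j + K - i with hD
    have hij : (i + D) % K = j := by
      rw [hD]; split_ifs with h
      · have : i + (j - i) = j := by omega
        rw [this, Nat.mod_eq_of_lt hj]
      · have : i + (j + K - i) = j + K := by omega
        rw [this, Nat.add_mod_right, Nat.mod_eq_of_lt hj]
    have hw := rtgOfWalk (r := fun x y => (x, y) ∈ E.erase e0) (fun t => f ((i + t) % K)) D ?_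
    · have h0 : (i + 0) % K = i := by
        rw [Nat.add_zero, Nat.mod_eq_of_lt hi]
      rw [h0, hij] at hw
      exact hw
    · intro t ht
      refine mem_erase.mpr ⟨?_, harc' (i + t)⟩
      intro hh
      exact he0 (hh ▸ hCAmem (i + t))
  -- contraction
  set rep := f 0 with hrep
  set g : α → α := fun y => if y ∈ S then rep else y with hg
  have hgS : ∀ y ∈ S, g y = rep := fun y hy => by rw [hg]; simp [hy]
  have hgNS : ∀ y, y ∉ S → g y = y := fun y hy => by rw [hg]; simp [hy]
  have hgeq : ∀ a b, g a = g b → a = b ∨ (a ∈ S ∧ b ∈ S) := by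
    intro a b hab
    by_cases ha : a ∈ S <;> by_cases hb : b ∈ S
    · exact Or.inr ⟨ha, hb⟩
    · rw [hgS a ha, hgNS b hb] at hab
      exact absurd (hab ▸ hrepS) hb
    · rw [hgNS a ha, hgS b hb] at hab
      exact absurd (hab.symm ▸ hrepS) ha
    · rw [hgNS a ha, hgNS b hb] at hab
      exact Or.inl hab
  set V' : Finset α := V.image g with hV'
  set base : Finset (α × α) := E.filter (fun e => ¬(e.1 ∈ S ∧ e.2 ∈ S)) with hbase
  set E' : Finset (α × α) := base.image (fun e => (g e.1, g e.2)) with hE'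
  -- base arcs are not cycle arcs
  have hbaseCA : ∀ e ∈ base, e ∉ CA := by
    intro e he hca
    obtain ⟨-, hcond⟩ := mem_filter.mp he
    obtain ⟨t, ht, rfl⟩ := mem_image.mp hca
    rw [mem_range] at ht
    refine hcond ⟨hfS t ht, ?_⟩
    rcases Nat.lt_or_ge (t + 1) K with h | h
    · exact hfS (t + 1) h
    · have : t + 1 = K := by omega
      rw [this, ← hf0]
      exact hrepS
  -- cardinalities
  have hbase_eq : base = E \ CA := by
    ext e
    rw [hbase, mem_filter, mem_sdiff]
    constructor
    · rintro ⟨heE, hcond⟩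
      refine ⟨heE, fun hca => ?_⟩
      exact (hbaseCA e (mem_filter.mpr ⟨heE, hcond⟩)) hca
    · rintro ⟨heE, hca⟩
      exact ⟨heE, fun hboth => hca (hintra e heE hboth.1 hboth.2)⟩
  have hbasecard : base.card = E.card - K := by
    rw [hbase_eq, card_sdiff_of_subset hCAsub, hCAcard]
  have hKE : K ≤ E.card := hCAcard ▸ card_le_card hCAsub
  -- contraction injective on base
  have hinj' : Set.InjOn (fun e : α × α => (g e.1, g e.2)) base := by
    rintro ⟨a, b⟩ h1 ⟨c, d⟩ h2 heq
    rw [mem_coe] at h1 h2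
    have h1E : (a, b) ∈ E := (mem_filter.mp h1).1
    have h2E : (c, d) ∈ E := (mem_filter.mp h2).1
    have hfst : g a = g c := congrArg Prod.fst heq
    have hsnd : g b = g d := congrArg Prod.snd heq
    by_contra hne12
    rcases hgeq a c hfst with rfl | ⟨haS, hcS⟩
    · rcases hgeq b d hsnd with rfl | ⟨hbS, hdS⟩
      · exact hne12 rfl
      · -- arcs (a,b) and (a,d), b ≠ d both in S: a → d ⇝ b kills (a,b)
        have hbd : b ≠ d := fun h => hne12 (by rw [h])
        refine hP (a, b) h1E ?_
        refine Relation.TransGen.trans_left (Relation.TransGen.single (b := d) ?_) ?_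
        · exact mem_erase.mpr ⟨fun hh => hbd (congrArg Prod.snd hh).symm, h2E⟩
        · exact reach (a, b) (hbaseCA _ h1) d hdS b hbS
    · rcases hgeq b d hsnd with rfl | ⟨hbS, hdS⟩
      · -- arcs (a,b), (c,b), a ≠ c both in S: a ⇝ c → b kills (a,b)
        have hac : a ≠ c := by
          intro h; exact hne12 (by rw [h])
        refine hP (a, b) h1E ?_
        refine Relation.TransGen.tail' (b := c) ?_ ?_
        · exact reach (a, b) (hbaseCA _ h1) a haS c hcS
        · exact mem_erase.mpr ⟨fun hh => hac (congrArg Prod.fst hh).symm, h2E⟩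
      · -- (a,b) has both endpoints in S: contradiction with base
        exact (mem_filter.mp h1).2 ⟨haS, hbS⟩
  have hE'card : E'.card = E.card - K := by
    rw [hE', Finset.card_image_of_injOn hinj', hbasecard]
  -- vertex count
  have hV'eq : V' = (V \ S) ∪ {rep} := by
    ext y
    rw [hV', mem_union, mem_sdiff, mem_image, mem_singleton]
    constructor
    · rintro ⟨z, hzV, rfl⟩
      by_cases hz : z ∈ S
      · exact Or.inr (hgS z hz)
      · rw [hgNS z hz]
        exact Or.inl ⟨hzV, hz⟩
    · rintro (⟨hyV, hyS⟩ | rfl)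
      · exact ⟨y, hyV, hgNS y hyS⟩
      · exact ⟨rep, hSV hrepS, hgS rep hrepS⟩
  have hV'card : V'.card = m - K + 1 := by
    rw [hV'eq, card_union_of_disjoint, card_sdiff_of_subset hSV, card_singleton, hScard, hm]
    rw [disjoint_singleton_right, mem_sdiff]
    rintro ⟨-, hr⟩
    exact hr hrepS
  -- E' endpoints and looplessness
  have hend' : ∀ e ∈ E', e.1 ∈ V' ∧ e.2 ∈ V' ∧ e.1 ≠ e.2 := by
    intro e' he'
    obtain ⟨e, heb, rfl⟩ := mem_image.mp he'
    have heE : e ∈ E := (mem_filter.mp heb).1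
    obtain ⟨h1, h2, h3⟩ := hend _ heE
    refine ⟨mem_image.mpr ⟨e.1, h1, rfl⟩, mem_image.mpr ⟨e.2, h2, rfl⟩, ?_⟩
    intro hh
    rcases hgeq e.1 e.2 hh with h | h
    · exact h3 h
    · exact (mem_filter.mp heb).2 ⟨h.1, h.2⟩
  -- P for E'
  have hP' : ∀ e' ∈ E', ¬ Relation.TransGen (fun a b => (a, b) ∈ E'.erase e') e'.1 e'.2 := by
    intro e' he' htg
    obtain ⟨e, heb, rfl⟩ := mem_image.mp he'
    have heE : e ∈ E := (mem_filter.mp heb).1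
    have heCA : e ∉ CA := hbaseCA _ heb
    -- connection within fibers of g
    have connect : ∀ a b, g a = g b →
        Relation.ReflTransGen (fun x y => (x, y) ∈ E.erase e) a b := by
      intro a b hab
      rcases hgeq a b hab with rfl | ⟨ha, hb⟩
      · exact .refl
      · exact reach e heCA a ha b hb
    -- simulation
    have sim : ∀ p q, Relation.TransGen
        (fun a b => (a, b) ∈ E'.erase (g e.1, g e.2)) p q →
        ∀ a, g a = p → ∃ b, g b = q ∧
          Relation.TransGen (fun x y => (x, y) ∈ E.erase e) a b := by
      intro p q htg'
      induction htg' with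
      | @single q' harc2 =>
        intro a hap
        obtain ⟨hne', hmem⟩ := mem_erase.mp harc2
        obtain ⟨e2, he2b, he2eq⟩ := mem_image.mp hmem
        have he2E : e2 ∈ E := (mem_filter.mp he2b).1
        have he2ne : e2 ≠ e := by
          intro hh
          exact hne' (by rw [← he2eq, hh])
        have hge1 : g e2.1 = p := congrArg Prod.fst he2eq
        have hge2 : g e2.2 = q' := congrArg Prod.snd he2eq
        refine ⟨e2.2, hge2, ?_⟩
        refine Relation.TransGen.tail' (connect a e2.1 (by rw [hap, ← hge1])) ?_
        exact mem_erase.mpr ⟨he2ne, he2E⟩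
      | @tail q' q'' htg2 harc2 ih =>
        intro a hap
        obtain ⟨b', hb', htgb⟩ := ih a hap
        obtain ⟨hne', hmem⟩ := mem_erase.mp harc2
        obtain ⟨e2, he2b, he2eq⟩ := mem_image.mp hmem
        have he2E : e2 ∈ E := (mem_filter.mp he2b).1
        have he2ne : e2 ≠ e := by
          intro hh
          exact hne' (by rw [← he2eq, hh])
        have hge1 : g e2.1 = q' := congrArg Prod.fst he2eq
        have hge2 : g e2.2 = q'' := congrArg Prod.snd he2eq
        refine ⟨e2.2, hge2, ?_⟩
        refine Relation.TransGen.tail' (Relation.ReflTransGen.trans htgb.to_reflTransGen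
          (connect b' e2.1 (by rw [hb', ← hge1]))) ?_
        exact mem_erase.mpr ⟨he2ne, he2E⟩
    obtain ⟨b, hgb, htgb⟩ := sim _ _ htg e.1 rfl
    have hrtg := connect b e.2 (by rw [hgb])
    exact hP e heE (Relation.TransGen.trans_left htgb hrtg)
  have hcard_split : E.card = E'.card + K := by
    rw [hE'card]; omega
  rw [hcard_split]
  set q : ℕ := m - K + 1 with hq
  have hKm : K ≤ m := by
    rw [← hm, ← hScard]
    exact card_le_card hSV
  have harith : max (2 * q - 2) (q ^ 2 / 4) + K ≤ max (2 * m - 2) (m ^ 2 / 4) := by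
    have h1 : 2 * q - 2 + K ≤ 2 * m - 2 := by omega
    have h2 : q ^ 2 / 4 + K ≤ max (2 * m - 2) (m ^ 2 / 4) := by
      rcases Nat.lt_or_ge q 4 with hq4 | hq4
      · refine le_max_of_le_left ?_
        have hq1 : 1 ≤ q := by omega
        interval_cases q <;> norm_num <;> omega
      · refine le_max_of_le_right ?_
        obtain ⟨r, hK4, hm4⟩ : ∃ r, K = r + 1 ∧ m = q + r := ⟨K - 1, by omega, by omega⟩
        have hr1 : 1 ≤ r := by omega
        have hkey : q ^ 2 + 4 * K ≤ m ^ 2 := by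
          rw [hK4, hm4]
          have h4r : 4 * r ≤ q * r := Nat.mul_le_mul_right r hq4
          nlinarith [sq_nonneg r]
        omega
    calc max (2 * q - 2) (q ^ 2 / 4) + K = max (2 * q - 2 + K) (q ^ 2 / 4 + K) := by
          rw [max_add_add_right]
      _ ≤ max (2 * m - 2) (m ^ 2 / 4) := max_le (le_max_of_le_left h1) h2
  have hm' : m - K + 1 < m := by omega
  have hIH := IH (m - K + 1) hm' V' E' hV'card hend' hP'
  calc E'.card + K ≤ max (2 * (m - K + 1) - 2) ((m - K + 1) ^ 2 / 4) + K :=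
        Nat.add_le_add_right hIH K
    _ ≤ max (2 * m - 2) (m ^ 2 / 4) := harith

/-- If `n ≥ 2` and `F` is a family of subsets of `[n]` such that for every
`i ∈ [n]` there are `A, B ∈ F` with `A \ B = {i}`, then `|F| ≥ 2·√(n − 2)`. -/
theorem separating_family_lower_bound (n : ℕ) (hn : 2 ≤ n) (F : Finset (Finset (Fin n)))
    (hsep : ∀ i : Fin n, ∃ A ∈ F, ∃ B ∈ F, A \ B = {i}) :
    2 * Real.sqrt ((n : ℝ) - 2) ≤ (F.card : ℝ) := by
  classical
  choose A hA B hB hAB using hsep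
  set m := F.card with hm
  set E : Finset (Finset (Fin n) × Finset (Fin n)) :=
    Finset.image (fun i => (A i, B i)) Finset.univ with hE
  have hmemA : ∀ i, i ∈ A i := fun i => by
    have : i ∈ A i \ B i := by rw [hAB i]; exact Finset.mem_singleton_self i
    exact (Finset.mem_sdiff.mp this).1
  have hmemB : ∀ i, i ∉ B i := fun i => by
    have : i ∈ A i \ B i := by rw [hAB i]; exact Finset.mem_singleton_self i
    exact (Finset.mem_sdiff.mp this).2
  have hinj : Function.Injective (fun i => (A i, B i)) := by
    intro i j hij
    simp only [Prod.mk.injEq] at hij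
    have : ({i} : Finset (Fin n)) = {j} := by rw [← hAB i, ← hAB j, hij.1, hij.2]
    simpa using this
  have hcard : E.card = n := by
    rw [hE, Finset.card_image_of_injective _ hinj, Finset.card_univ, Fintype.card_fin]
  have hend : ∀ e ∈ E, e.1 ∈ F ∧ e.2 ∈ F ∧ e.1 ≠ e.2 := by
    intro e he
    rw [hE, Finset.mem_image] at he
    obtain ⟨i, _, rfl⟩ := he
    refine ⟨hA i, hB i, ?_⟩
    intro h
    have h' : A i = B i := h
    exact hmemB i (h' ▸ hmemA i)
  have hP : ∀ e ∈ E, ¬ Relation.TransGen (fun a b => (a, b) ∈ E.erase e) e.1 e.2 := by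
    intro e he htg
    rw [hE, Finset.mem_image] at he
    obtain ⟨i, _, rfl⟩ := he
    have step : ∀ X Y, ((X, Y) ∈ E.erase (A i, B i)) → i ∈ X → i ∈ Y := by
      intro X Y hXY hiX
      have hmem := Finset.mem_erase.mp hXY
      rw [hE, Finset.mem_image] at hmem
      obtain ⟨j, -, hj⟩ := hmem.2
      have hji : j ≠ i := fun h => hmem.1 (by rw [← hj, h])
      injection hj with e1 e2
      subst e1; subst e2
      by_contra hiB
      have : i ∈ A j \ B j := Finset.mem_sdiff.mpr ⟨hiX, hiB⟩
      rw [hAB j] at this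
      exact hji (Finset.mem_singleton.mp this).symm
    have key : ∀ {X Y : Finset (Fin n)},
        Relation.TransGen (fun a b => (a, b) ∈ E.erase (A i, B i)) X Y → i ∈ X → i ∈ Y := by
      intro X Y h
      induction h with
      | single h => exact fun hi => step _ _ h hi
      | tail _ h ih => exact fun hi => step _ _ h (ih hi)
    exact hmemB i (key htg (hmemA i))
  have hbound := digraph_card_bound m F E rfl hend hP
  rw [hcard] at hbound
  have h4 : 4 * n ≤ m * m + 8 := by
    rcases le_max_iff.mp hbound with h | h
    · -- n ≤ 2m - 2 : then 4n ≤ 8m - 8 ≤ m² + 8 since (m-4)² ≥ 0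
      have hsq : 8 * m ≤ m * m + 16 := by nlinarith [sq_nonneg ((m : ℤ) - 4)]
      omega
    · have hq : m ^ 2 / 4 * 4 ≤ m ^ 2 := Nat.div_mul_le_self (m ^ 2) 4
      have hmm : m ^ 2 = m * m := by ring
      omega
  -- convert to reals
  have hm0 : (0 : ℝ) ≤ (m : ℝ) / 2 := by positivity
  have hle : (n : ℝ) - 2 ≤ ((m : ℝ) / 2) ^ 2 := by
    have : (4 * n : ℝ) ≤ (m : ℝ) * m + 8 := by exact_mod_cast h4
    nlinarith
  calc 2 * Real.sqrt ((n : ℝ) - 2) ≤ 2 * Real.sqrt (((m : ℝ) / 2) ^ 2) := by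
        have := Real.sqrt_le_sqrt hle
        linarith
    _ = 2 * ((m : ℝ) / 2) := by rw [Real.sqrt_sq hm0]
    _ = (m : ℝ) := by ring
end

section
/- Let P be a finite nonempty poset with |P| = k, and let A_1, ..., A_k be pairwise distinct subsets of [w*(P)], each of size at most h*(P), which form an induced copy of P under inclusion. Then for every a ∈ [w*(P)] there exist indices i, j ∈ [k] such that A_i \ A_j = {a}. -/
/-- Any optimal cube-height embedding of a finite nonempty poset `P`
(distinct sets `A_1, …, A_k ⊆ [w*(P)]`, `k = |P|`, each of size at most
`h*(P)`, inducing a copy of `P` under inclusion) separates its ground set: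
for every `a ∈ [w*(P)]` there are `i, j` with `A_i \ A_j = {a}`. -/
theorem optimal_embedding_separates (P : Type*) [PartialOrder P] [Fintype P] [Nonempty P]
    (f : P → Finset (Fin (cubeWidth P))) (hinj : Function.Injective f)
    (hcard : ∀ p, (f p).card ≤ cubeHeight P)
    (hiso : ∀ p q, p ≤ q ↔ f p ⊆ f q) :
    ∀ a : Fin (cubeWidth P), ∃ p q : P, f p \ f q = {a} := by
  intro a
  by_contra h
  push_neg at h
  -- key: erasing `a` reflects inclusion
  have key : ∀ p q : P, f p ⊆ f q ↔ (f p).erase a ⊆ (f q).erase a := by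
    intro p q
    constructor
    · intro hpq
      exact Finset.erase_subset_erase a hpq
    · intro he
      have hsub : f p \ f q ⊆ {a} := by
        intro x hx
        rw [Finset.mem_sdiff] at hx
        rw [Finset.mem_singleton]
        by_contra hxa
        have : x ∈ (f p).erase a := Finset.mem_erase.mpr ⟨hxa, hx.1⟩
        have := Finset.mem_of_mem_erase (he this)
        exact hx.2 this
      rcases Finset.subset_singleton_iff.mp hsub with h0 | h1
      · intro x hx
        by_contra hxq
        have : x ∈ f p \ f q := Finset.mem_sdiff.mpr ⟨hx, hxq⟩
        rw [h0] at this
        exact absurd this (Finset.notMem_empty x)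
      · exact absurd h1 (h p q)
  have hnpos : 0 < cubeWidth P := a.pos
  -- an equivalence between `{x : Fin (cubeWidth P) // x ≠ a}` and `Fin (n-1)`
  have hcardsub : Fintype.card {x : Fin (cubeWidth P) // x ≠ a} = cubeWidth P - 1 := by
    simp [Fintype.card_subtype_compl, Fintype.card_subtype_eq]
  let e : {x : Fin (cubeWidth P) // x ≠ a} ≃ Fin (cubeWidth P - 1) := Fintype.equivFinOfCardEq hcardsub
  let F : P → Finset (Fin (cubeWidth P - 1)) := fun p =>
    ((f p).subtype (fun x => x ≠ a)).map ⟨e, e.injective⟩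
  have hFsub : ∀ p q : P, F p ⊆ F q ↔ f p ⊆ f q := by
    intro p q
    rw [key p q]
    constructor
    · intro hF x hx
      rw [Finset.mem_erase] at hx
      have hmem : (⟨x, hx.1⟩ : {x : Fin (cubeWidth P) // x ≠ a}) ∈ (f p).subtype (fun x => x ≠ a) := by
        simp [hx.2]
      have : e ⟨x, hx.1⟩ ∈ F q := hF (Finset.mem_map_of_mem _ hmem)
      rw [Finset.mem_map] at this
      rcases this with ⟨y, hy, hey⟩
      have : y = ⟨x, hx.1⟩ := e.injective hey
      subst this
      rw [Finset.mem_subtype] at hy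
      exact Finset.mem_erase.mpr ⟨hx.1, hy⟩
    · intro he
      intro z hz
      rw [Finset.mem_map] at hz ⊢
      rcases hz with ⟨y, hy, hey⟩
      refine ⟨y, ?_, hey⟩
      rw [Finset.mem_subtype] at hy ⊢
      have : (y : Fin (cubeWidth P)) ∈ (f p).erase a := Finset.mem_erase.mpr ⟨y.2, hy⟩
      exact Finset.mem_of_mem_erase (he this)
  have hembeds : EmbedsLow P (cubeWidth P - 1) (cubeHeight P) := by
    refine ⟨F, ?_, ?_, ?_⟩
    · intro p q hFeq
      have h1 : f p ⊆ f q := (hFsub p q).mp (le_of_eq hFeq)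
      have h2 : f q ⊆ f p := (hFsub q p).mp (le_of_eq hFeq.symm)
      exact hinj (Finset.Subset.antisymm h1 h2)
    · intro p
      calc (F p).card = ((f p).subtype (fun x => x ≠ a)).card := Finset.card_map _
        _ ≤ (f p).card := by
            rw [Finset.card_subtype]; exact Finset.card_filter_le _ _
        _ ≤ cubeHeight P := hcard p
    · intro p q
      rw [hiso p q, hFsub p q]
  have hle : cubeWidth P ≤ cubeWidth P - 1 := Nat.sInf_le hembeds
  omega
end

section
/- Let P be a finite nonempty poset and let F be a P-saturated family of subsets of [n] that contains every subset of [n] of size at most h*(P) − 1. Then F does not shatter any subset of [n] of size w*(P); in particular the VC-dimension of F is strictly less than w*(P). -/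
/-- A family `F` of subsets of `[n]` contains an induced copy of the poset `P`
if there is an injective map `f` from `P` into `F` such that
`p ≤ q` in `P` iff `f p ⊆ f q`. -/
def HasCopy (P : Type*) [PartialOrder P] {n : ℕ} (F : Finset (Finset (Fin n))) : Prop :=
  ∃ f : P → Finset (Fin n), Function.Injective f ∧ (∀ p, f p ∈ F) ∧
    ∀ p q, p ≤ q ↔ f p ⊆ f q

/-- `F` is `P`-saturated: it contains no induced copy of `P`, but adding any
other subset of `[n]` creates an induced copy of `P`. -/
def IsSat (P : Type*) [PartialOrder P] {n : ℕ} (F : Finset (Finset (Fin n))) : Prop :=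
  ¬ HasCopy P F ∧ ∀ S : Finset (Fin n), S ∉ F → HasCopy P (insert S F)

/-- `F` shatters `S` if every subset of `S` arises as `A ∩ S` for some `A ∈ F`. -/
def ShattersF {n : ℕ} (F : Finset (Finset (Fin n))) (S : Finset (Fin n)) : Prop :=
  ∀ T ⊆ S, ∃ A ∈ F, A ∩ S = T

lemma embedsLow_self (P : Type*) [PartialOrder P] [Fintype P] :
    EmbedsLow P (Fintype.card P) (Fintype.card P) := by
  classical
  let e := Fintype.equivFin P
  refine ⟨fun p => (Finset.univ.filter (· ≤ p)).image e, ?_, ?_, ?_⟩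
  · intro p q h
    have h' : Finset.univ.filter (· ≤ p) = Finset.univ.filter (· ≤ q) :=
      Finset.image_injective e.injective h
    have hp : p ∈ Finset.univ.filter (· ≤ q) := by
      rw [← h']; simp
    have hq : q ∈ Finset.univ.filter (· ≤ p) := by
      rw [h']; simp
    simp at hp hq
    exact le_antisymm hp hq
  · intro p
    exact le_trans Finset.card_image_le ((Finset.card_filter_le _ _).trans_eq Finset.card_univ)
  · intro p q
    rw [Finset.image_subset_image_iff e.injective]
    constructor
    · intro h r hr
      simp at hr ⊢
      exact hr.trans h
    · intro h
      have : p ∈ Finset.univ.filter (· ≤ q) := h (by simp)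
      simpa using this

/-- If `F` is a `P`-saturated family of subsets of `[n]` containing every
subset of size at most `h*(P) − 1`, then `F` shatters no set of size `w*(P)`;
in particular the VC-dimension of `F` is strictly less than `w*(P)`. -/
theorem saturated_vc_dimension_lt_cubeWidth (P : Type*) [PartialOrder P] [Fintype P] [Nonempty P]
    (n : ℕ) (F : Finset (Finset (Fin n))) (hsat : IsSat P F)
    (hlow : ∀ A : Finset (Fin n), A.card < cubeHeight P → A ∈ F) :
    (∀ S : Finset (Fin n), S.card = cubeWidth P → ¬ ShattersF F S) ∧
      (∀ S : Finset (Fin n), ShattersF F S → S.card < cubeWidth P) := by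
  classical
  have hHmem : cubeHeight P ∈ {h | ∃ m, EmbedsLow P m h} :=
    Nat.sInf_mem ⟨Fintype.card P, Fintype.card P, embedsLow_self P⟩
  obtain ⟨m, hm⟩ := hHmem
  have hW : EmbedsLow P (cubeWidth P) (cubeHeight P) :=
    Nat.sInf_mem (s := {w | EmbedsLow P w (cubeHeight P)}) ⟨m, hm⟩
  obtain ⟨g, hg_inj, hg_card, hg_ord⟩ := hW
  have key : ∀ S : Finset (Fin n), S.card = cubeWidth P → ¬ ShattersF F S := by
    intro S hS hsh
    let e : Fin (cubeWidth P) → Fin n :=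
      fun i => ((S.equivFin.symm (finCongr hS.symm i)) : Fin n)
    have he_inj : Function.Injective e :=
      Subtype.val_injective.comp (S.equivFin.symm.injective.comp (finCongr hS.symm).injective)
    have he_mem : ∀ i, e i ∈ S := fun i => (S.equivFin.symm _).2
    let T : P → Finset (Fin n) := fun p => (g p).image e
    have hT_inj : Function.Injective T := fun p q h =>
      hg_inj (Finset.image_injective he_inj h)
    have hT_sub : ∀ p, T p ⊆ S := by
      intro p x hx
      simp only [T, Finset.mem_image] at hx
      obtain ⟨i, _, rfl⟩ := hx
      exact he_mem i
    have hT_card : ∀ p, (T p).card ≤ cubeHeight P := fun p =>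
      le_trans Finset.card_image_le (hg_card p)
    have hT_ord : ∀ p q, p ≤ q ↔ T p ⊆ T q := by
      intro p q
      rw [hg_ord, ← Finset.image_subset_image_iff he_inj]
    have hchoose : ∀ p, ∃ A ∈ F, A ∩ S = T p := fun p => hsh (T p) (hT_sub p)
    choose B hBF hBS using hchoose
    let A : P → Finset (Fin n) := fun p =>
      if (T p).card < cubeHeight P then T p else B p
    have hA_capS : ∀ p, A p ∩ S = T p := by
      intro p
      by_cases h : (T p).card < cubeHeight P
      · simp only [A, if_pos h]
        exact Finset.inter_eq_left.mpr (hT_sub p)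
      · simp only [A, if_neg h]
        exact hBS p
    have hA_mem : ∀ p, A p ∈ F := by
      intro p
      by_cases h : (T p).card < cubeHeight P
      · simpa only [A, if_pos h] using hlow (T p) h
      · simpa only [A, if_neg h] using hBF p
    have hA_ord : ∀ p q, p ≤ q ↔ A p ⊆ A q := by
      intro p q
      constructor
      · intro hpq
        have hTT : T p ⊆ T q := (hT_ord p q).1 hpq
        by_cases h : (T p).card < cubeHeight P
        · calc A p = T p := by simp only [A, if_pos h]
            _ ⊆ A q ∩ S := by rw [hA_capS q]; exact hTT
            _ ⊆ A q := Finset.inter_subset_left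
        · have hcard : (T q).card ≤ (T p).card := by
            have h1 := hT_card q
            omega
          have hEq : T p = T q := Finset.eq_of_subset_of_card_le hTT hcard
          have hpq' : p = q := hT_inj hEq
          subst hpq'
          exact subset_rfl
      · intro hA
        have hTT : T p ⊆ T q := by
          rw [← hA_capS p, ← hA_capS q]
          exact Finset.inter_subset_inter_right hA
        exact (hT_ord p q).2 hTT
    have hA_inj : Function.Injective A := by
      intro p q h
      apply hT_inj
      rw [← hA_capS p, ← hA_capS q, h]
    exact hsat.1 ⟨A, hA_inj, hA_mem, hA_ord⟩
  refine ⟨key, ?_⟩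
  intro S hsh
  by_contra hcon
  push_neg at hcon
  obtain ⟨S', hS'sub, hS'card⟩ := Finset.exists_subset_card_eq hcon
  refine key S' hS'card ?_
  intro T hT
  obtain ⟨A, hAF, hAS⟩ := hsh T (hT.trans hS'sub)
  refine ⟨A, hAF, ?_⟩
  have : A ∩ S' = (A ∩ S) ∩ S' := by
    rw [Finset.inter_assoc, Finset.inter_eq_right.mpr hS'sub]
  rw [this, hAS, Finset.inter_eq_left.mpr hT]
end

section
/- For every t ≥ 1, let P_t be the poset on the 2t elements a_1, b_1, ..., a_t, b_t in which a_i and b_i are incomparable for each i, and x ≺ y whenever x ∈ {a_i, b_i}, y ∈ {a_j, b_j} and i < j. Then the poset of all subsets of [2t−1] ordered by inclusion contains no induced copy of P_t, while the poset of all subsets of [2t] ordered by inclusion does contain an induced copy of P_t. -/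
/-- The poset `Q_n` (all subsets of `[n]` ordered by inclusion) contains an
induced copy of the poset `P`. -/
def FullEmbed (P : Type*) [PartialOrder P] (n : ℕ) : Prop :=
  ∃ f : P → Finset (Fin n), Function.Injective f ∧ ∀ p q, p ≤ q ↔ f p ⊆ f q

/-- The poset `P_t` on `2t` elements `a_1, b_1, …, a_t, b_t`: the element with
index `(i, x)` is `a_i` if `x = 0` and `b_i` if `x = 1`. -/
@[ext]
structure PosetPt (t : ℕ) where
  i : Fin t
  j : Fin 2

/-- `a_i` and `b_i` are incomparable for each `i`, and `x ≺ y` whenever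
`x ∈ {a_i, b_i}`, `y ∈ {a_j, b_j}` and `i < j`. -/
instance (t : ℕ) : PartialOrder (PosetPt t) where
  le p q := p = q ∨ p.i < q.i
  le_refl p := Or.inl rfl
  le_trans p q r h1 h2 := by
    rcases h1 with rfl | h1
    · exact h2
    · rcases h2 with rfl | h2
      · exact Or.inr h1
      · exact Or.inr (lt_trans h1 h2)
  le_antisymm p q h1 h2 := by
    rcases h1 with rfl | h1
    · rfl
    · rcases h2 with rfl | h2
      · rfl
      · exact absurd (lt_trans h1 h2) (lt_irrefl _)

lemma PosetPt.le_iff {t : ℕ} (p q : PosetPt t) : p ≤ q ↔ p = q ∨ p.i < q.i := Iff.rfl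

/-- For every `t ≥ 1`, the poset `P_t` has no induced copy in the poset of
subsets of `[2t − 1]`, but it does have one in the poset of subsets of `[2t]`. -/
theorem posetPt_embeds_iff (t : ℕ) (ht : 1 ≤ t) :
    ¬ FullEmbed (PosetPt t) (2 * t - 1) ∧ FullEmbed (PosetPt t) (2 * t) := by
  constructor
  · rintro ⟨f, hinj, hord⟩
    set A : Fin t → Finset (Fin (2 * t - 1)) := fun i => f ⟨i, 0⟩ with hA
    set B : Fin t → Finset (Fin (2 * t - 1)) := fun i => f ⟨i, 1⟩ with hB
    have hinc : ∀ i : Fin t, (A i ∩ B i).card + 2 ≤ (A i ∪ B i).card := by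
      intro i
      have h1 : ¬ A i ⊆ B i := by
        intro h
        rcases (hord ⟨i, 0⟩ ⟨i, 1⟩).2 h with h' | h'
        · injection h' with h1 h2; exact absurd h2 (by decide)
        · exact lt_irrefl _ h'
      have h2 : ¬ B i ⊆ A i := by
        intro h
        rcases (hord ⟨i, 1⟩ ⟨i, 0⟩).2 h with h' | h'
        · injection h' with h1 h2; exact absurd h2 (by decide)
        · exact lt_irrefl _ h'
      obtain ⟨a, haA, haB⟩ := Finset.not_subset.mp h1
      obtain ⟨b, hbB, hbA⟩ := Finset.not_subset.mp h2
      have hsub : insert a (insert b (A i ∩ B i)) ⊆ A i ∪ B i := by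
        intro x hx
        simp only [Finset.mem_insert, Finset.mem_inter, Finset.mem_union] at hx ⊢
        rcases hx with rfl | rfl | ⟨h, _⟩ <;> tauto
      have hcard := Finset.card_le_card hsub
      have hb : b ∉ A i ∩ B i := by simp [hbA]
      have ha : a ∉ insert b (A i ∩ B i) := by
        simp only [Finset.mem_insert, Finset.mem_inter]
        rintro (rfl | ⟨_, h⟩)
        · exact hbA haA
        · exact haB h
      rw [Finset.card_insert_of_notMem ha, Finset.card_insert_of_notMem hb] at hcard
      omega
    have key : ∀ i j : Fin t, i < j → (A i ∪ B i) ⊆ (A j ∩ B j) := by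
      intro i j hij x hx
      simp only [Finset.mem_union] at hx
      simp only [Finset.mem_inter]
      rcases hx with hx | hx
      · exact ⟨(hord ⟨i, 0⟩ ⟨j, 0⟩).1 (Or.inr hij) hx,
               (hord ⟨i, 0⟩ ⟨j, 1⟩).1 (Or.inr hij) hx⟩
      · exact ⟨(hord ⟨i, 1⟩ ⟨j, 0⟩).1 (Or.inr hij) hx,
               (hord ⟨i, 1⟩ ⟨j, 1⟩).1 (Or.inr hij) hx⟩
    have main : ∀ n, ∀ hn : n < t, 2 * n ≤ (A ⟨n, hn⟩ ∩ B ⟨n, hn⟩).card := by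
      intro n
      induction n with
      | zero => intro hn; simp
      | succ m ih =>
        intro hn
        have hm : m < t := by omega
        have h1 := hinc ⟨m, hm⟩
        have h2 := Finset.card_le_card (key ⟨m, hm⟩ ⟨m + 1, hn⟩ (by simp [Fin.lt_def]))
        have h3 := ih hm
        omega
    have hfin : (A ⟨t - 1, by omega⟩ ∪ B ⟨t - 1, by omega⟩).card ≤ 2 * t - 1 := by
      have := Finset.card_le_univ (A ⟨t - 1, by omega⟩ ∪ B ⟨t - 1, by omega⟩)
      simpa using this
    have h1 := hinc ⟨t - 1, by omega⟩
    have h2 := main (t - 1) (by omega)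
    omega
  · set F : PosetPt t → Finset (Fin (2 * t)) := fun p =>
      (Finset.univ.filter (fun k : Fin (2 * t) => (k : ℕ) < 2 * p.i.val)) ∪
        {⟨2 * p.i.val + p.j.val, by have := p.i.isLt; have := p.j.isLt; omega⟩} with hF
    have hmem : ∀ (p : PosetPt t) (k : Fin (2 * t)),
        k ∈ F p ↔ (k : ℕ) < 2 * p.i.val ∨ (k : ℕ) = 2 * p.i.val + p.j.val := by
      intro p k
      simp [hF, Fin.ext_iff]
      exact or_comm
    refine ⟨F, ?_, ?_⟩
    · intro p q h
      have hp := (hmem q ⟨2 * p.i.val + p.j.val,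
          by have := p.i.isLt; have := p.j.isLt; omega⟩).1
        (by rw [← h]; exact (hmem p _).2 (Or.inr rfl))
      have hq := (hmem p ⟨2 * q.i.val + q.j.val,
          by have := q.i.isLt; have := q.j.isLt; omega⟩).1
        (by rw [h]; exact (hmem q _).2 (Or.inr rfl))
      simp only at hp hq
      have hpj := p.j.isLt
      have hqj := q.j.isLt
      have hi : p.i = q.i := Fin.ext (by omega)
      have hj : p.j = q.j := Fin.ext (by omega)
      exact PosetPt.ext hi hj
    · intro p q
      constructor
      · rintro (rfl | h)
        · exact subset_rfl
        · intro k hk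
          rw [hmem] at hk ⊢
          have h1 := p.j.isLt
          have h2 : p.i.val < q.i.val := h
          left; omega
      · intro h
        have hp := (hmem q ⟨2 * p.i.val + p.j.val,
            by have := p.i.isLt; have := p.j.isLt; omega⟩).1
          (h ((hmem p _).2 (Or.inr rfl)))
        simp only at hp
        have hpj := p.j.isLt
        have hqj := q.j.isLt
        rcases hp with hp | hp
        · exact Or.inr (show p.i.val < q.i.val by omega)
        · refine Or.inl ?_
          have hi : p.i = q.i := Fin.ext (by omega)
          have hj : p.j = q.j := Fin.ext (by omega)
          exact PosetPt.ext hi hj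
end

section
/- For every k ≥ 2 there exists n₀ such that for all n ≥ n₀, the induced saturation number of the antichain A_k on k elements satisfies sat*(n, A_k) ≤ (k−1)(n−1) + 2. -/
/-- The induced saturation number `sat*(n, P)`: the minimum size of a
`P`-saturated family of subsets of `[n]`. -/
noncomputable def satNum (n : ℕ) (P : Type*) [PartialOrder P] : ℕ :=
  sInf {m | ∃ F : Finset (Finset (Fin n)), IsSat P F ∧ F.card = m}

namespace AnticSat
open Finset

def lset (n r i t : ℕ) : Finset (Fin n) :=
  univ.filter (fun x => x.val = i ∨ (r ≤ x.val ∧ x.val < r + t))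

def uset (n r i ℓ : ℕ) : Finset (Fin n) :=
  univ.filter (fun x =>
    (x.val < r ∧ ((i ≤ x.val ∧ x.val < i + ℓ) ∨ x.val + r < i + ℓ)) ∨ r ≤ x.val)

def Fam (n r : ℕ) : Finset (Finset (Fin n)) :=
  insert ∅ (insert univ
    ((((range r) ×ˢ (range (n - r + 1))).image (fun p => lset n r p.1 p.2)) ∪
     (((range r) ×ˢ (Ico 2 r)).image (fun p => uset n r p.1 p.2))))

variable {n r i j t t' ℓ ℓ' : ℕ}

lemma mem_lset {x : Fin n} : x ∈ lset n r i t ↔ (x.val = i ∨ (r ≤ x.val ∧ x.val < r + t)) := by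
  simp [lset]

lemma mem_uset {x : Fin n} : x ∈ uset n r i ℓ ↔
    ((x.val < r ∧ ((i ≤ x.val ∧ x.val < i + ℓ) ∨ x.val + r < i + ℓ)) ∨ r ≤ x.val) := by
  simp [uset]

lemma lset_mem_Fam (hi : i < r) (ht : t ≤ n - r) : lset n r i t ∈ Fam n r := by
  simp only [Fam, mem_insert, mem_union, mem_image, mem_product, mem_range, mem_Ico]
  exact Or.inr (Or.inr (Or.inl ⟨(i, t), ⟨by simpa using ⟨hi, by omega⟩, rfl⟩⟩))

lemma uset_mem_Fam (hi : i < r) (h2 : 2 ≤ ℓ) (hℓ : ℓ < r) : uset n r i ℓ ∈ Fam n r := by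
  simp only [Fam, mem_insert, mem_union, mem_image, mem_product, mem_range, mem_Ico]
  exact Or.inr (Or.inr (Or.inr ⟨(i, ℓ), ⟨by simpa using ⟨hi, h2, hℓ⟩, rfl⟩⟩))

lemma empty_mem_Fam : (∅ : Finset (Fin n)) ∈ Fam n r := by simp [Fam]

lemma univ_mem_Fam : (univ : Finset (Fin n)) ∈ Fam n r := by simp [Fam]

lemma lset_mono (h : t ≤ t') : lset n r i t ⊆ lset n r i t' := by
  intro x hx; rw [mem_lset] at *; omega

lemma uset_mono (h : ℓ ≤ ℓ') : uset n r i ℓ ⊆ uset n r i ℓ' := by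
  intro x hx; rw [mem_uset] at *; omega

lemma lset_subset_uset (hi : i < r) (h1 : 1 ≤ ℓ) : lset n r i t ⊆ uset n r i ℓ := by
  intro x hx; rw [mem_lset] at hx; rw [mem_uset]; omega

lemma uset_top (hi : i < r) : uset n r i r = univ := by
  ext x; rw [mem_uset]; simp; omega

-- P1
lemma not_lset_subset (hn : r ≤ n) (hi : i < r) (hj : j < r) (hij : i ≠ j) :
    ¬ lset n r i t ⊆ lset n r j t' := by
  intro h
  have hx : (⟨i, by omega⟩ : Fin n) ∈ lset n r i t := by rw [mem_lset]; simp
  have := h hx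
  rw [mem_lset] at this
  simp at this; omega

-- P2
lemma not_uset_subset (hn : r ≤ n) (hi : i < r) (hj : j < r) (hij : i ≠ j)
    (h1 : 1 ≤ ℓ) (h2 : ℓ < r) : ¬ uset n r i ℓ ⊆ uset n r j ℓ := by
  intro h
  set w : ℕ := if i < j then (if ℓ + j ≤ r + i then i else ℓ + j - r)
    else (if ℓ + j ≤ i then i else if ℓ + j < r then ℓ + j else ℓ + j - r) with hw
  have hwr : w < r ∧ ((i ≤ w ∧ w < i + ℓ) ∨ w + r < i + ℓ) ∧
      ¬((j ≤ w ∧ w < j + ℓ) ∨ w + r < j + ℓ) := by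
    rw [hw]; split_ifs <;> omega
  have hx : (⟨w, by omega⟩ : Fin n) ∈ uset n r i ℓ := by rw [mem_uset]; simp; omega
  have := h hx
  rw [mem_uset] at this
  simp at this; omega



lemma card_filter_val (q : ℕ → Prop) [DecidablePred q] :
    (univ.filter (fun x : Fin n => q x.val)).card = ((range n).filter q).card := by
  have h : ((range n).filter q) = (univ.filter (fun x : Fin n => q x.val)).image Fin.val := by
    ext x
    simp only [mem_filter, mem_range, mem_image, mem_univ, true_and]
    constructor
    · rintro ⟨hx, hq⟩; exact ⟨⟨x, hx⟩, hq, rfl⟩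
    · rintro ⟨y, hy, rfl⟩; exact ⟨y.isLt, hy⟩
  rw [h, Finset.card_image_of_injective _ Fin.val_injective]

lemma card_lset (hi : i < r) (hn : r + t ≤ n) :
    (Finset.univ.filter (fun x : Fin n => x.val = i ∨ (r ≤ x.val ∧ x.val < r + t))).card
      = t + 1 := by
  rw [card_filter_val (fun x => x = i ∨ (r ≤ x ∧ x < r + t))]
  have h : ((range n).filter (fun x => x = i ∨ (r ≤ x ∧ x < r + t))) = insert i (Ico r (r + t)) := by
    ext x; simp only [mem_filter, mem_range, mem_insert, mem_Ico]; omega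
  rw [h, Finset.card_insert_of_notMem (by simp; omega), Nat.card_Ico]; omega

lemma card_uset (hi : i < r) (h1 : 1 ≤ ℓ) (hℓ : ℓ ≤ r) (hn : r ≤ n) :
    (Finset.univ.filter (fun x : Fin n =>
      (x < r ∧ ((i ≤ x ∧ x < i + ℓ) ∨ x + r < i + ℓ)) ∨ r ≤ x)).card = ℓ + (n - r) := by
  rw [card_filter_val (fun x => (x < r ∧ ((i ≤ x ∧ x < i + ℓ) ∨ x + r < i + ℓ)) ∨ r ≤ x)]
  have h : ((range n).filter (fun x => (x < r ∧ ((i ≤ x ∧ x < i + ℓ) ∨ x + r < i + ℓ)) ∨ r ≤ x))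
      = (Ico i (min (i + ℓ) r) ∪ Ico 0 (i + ℓ - r)) ∪ Ico r n := by
    ext x; simp only [mem_filter, mem_range, mem_union, mem_Ico]; omega
  rw [h, Finset.card_union_of_disjoint, Finset.card_union_of_disjoint] <;>
    simp only [Nat.card_Ico, Finset.disjoint_left, mem_Ico, mem_union]
  · omega
  · intro x hx; omega
  · intro x hx; omega

lemma card_ge_r (hn : r ≤ n) :
    (Finset.univ.filter (fun x : Fin n => r ≤ x.val)).card = n - r := by
  rw [card_filter_val]
  have h : ((range n).filter (fun x => r ≤ x)) = Ico r n := by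
    ext x; simp only [mem_filter, mem_range, mem_Ico]; omega
  rw [h, Nat.card_Ico]


lemma lset_card (hi : i < r) (hn : r + t ≤ n) : (lset n r i t).card = t + 1 :=
  card_lset hi hn

lemma uset_card (hi : i < r) (h1 : 1 ≤ ℓ) (hℓ : ℓ ≤ r) (hn : r ≤ n) :
    (uset n r i ℓ).card = ℓ + (n - r) :=
  card_uset hi h1 hℓ hn

/-- membership in the `i`-th chain -/
def InChain (n r i : ℕ) (T : Finset (Fin n)) : Prop :=
  T = ∅ ∨ T = univ ∨ (∃ t ≤ n - r, T = lset n r i t) ∨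
    (∃ ℓ, 2 ≤ ℓ ∧ ℓ < r ∧ T = uset n r i ℓ)

lemma mem_Fam_chain {T : Finset (Fin n)} (hT : T ∈ Fam n r) (hr : 1 ≤ r) :
    ∃ i < r, InChain n r i T := by
  simp only [Fam, mem_insert, mem_union, mem_image, mem_product, mem_range, mem_Ico] at hT
  rcases hT with h | h | ⟨⟨a, b⟩, hab, rfl⟩ | ⟨⟨a, b⟩, hab, rfl⟩
  · exact ⟨0, hr, Or.inl h⟩
  · exact ⟨0, hr, Or.inr (Or.inl h)⟩
  · obtain ⟨ha, hb⟩ : a < r ∧ b < n - r + 1 := by simpa using hab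
    exact ⟨a, ha, Or.inr (Or.inr (Or.inl ⟨b, by omega, rfl⟩))⟩
  · obtain ⟨ha, hb1, hb2⟩ : a < r ∧ 2 ≤ b ∧ b < r := by
      simpa using hab
    exact ⟨a, ha, Or.inr (Or.inr (Or.inr ⟨b, hb1, hb2, rfl⟩))⟩

lemma chain_total {T T' : Finset (Fin n)} (hi : i < r)
    (h1 : InChain n r i T) (h2 : InChain n r i T') : T ⊆ T' ∨ T' ⊆ T := by
  rcases h1 with rfl | rfl | ⟨t, ht, rfl⟩ | ⟨ℓ, hℓ2, hℓr, rfl⟩ <;>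
    rcases h2 with rfl | rfl | ⟨t', ht', rfl⟩ | ⟨ℓ', hℓ2', hℓr', rfl⟩
  all_goals try (exact Or.inl (empty_subset _))
  all_goals try (exact Or.inr (empty_subset _))
  all_goals try (exact Or.inr (subset_univ _))
  all_goals try (exact Or.inl (subset_univ _))
  · rcases le_total t t' with h | h
    · exact Or.inl (lset_mono h)
    · exact Or.inr (lset_mono h)
  · exact Or.inl (lset_subset_uset hi (by omega))
  · exact Or.inr (lset_subset_uset hi (by omega))
  · rcases le_total ℓ ℓ' with h | h
    · exact Or.inl (uset_mono h)
    · exact Or.inr (uset_mono h)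

lemma card_lt_r (hn : r ≤ n) :
    (Finset.univ.filter (fun x : Fin n => x.val < r)).card = r := by
  rw [card_filter_val (fun x => x < r)]
  have h : ((range n).filter (fun x => x < r)) = range r := by
    ext x; simp only [mem_filter, mem_range]; omega
  rw [h, card_range]

lemma Fam_card (hr : 1 ≤ r) (hn : r + 1 ≤ n) : (Fam n r).card ≤ r * (n - 1) + 2 := by
  rcases eq_or_lt_of_le hr with hr1 | hr2
  · -- r = 1
    have hsub : Fam n r ⊆ insert ∅ ((range n).image (fun t => lset n 1 0 t)) := by
      intro T hT
      simp only [Fam, ← hr1, mem_insert, mem_union, mem_image, mem_product, mem_range,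
        mem_Ico] at hT ⊢
      rcases hT with h | h | ⟨⟨c, b⟩, hab, rfl⟩ | ⟨⟨c, b⟩, hab, rfl⟩
      · exact Or.inl h
      · refine Or.inr ⟨n - 1, by omega, ?_⟩
        rw [h]; ext x
        rw [mem_lset]
        simp only [mem_univ, iff_true]
        have := x.isLt; omega
      · obtain ⟨hc, hb⟩ : (c < 1 ∧ b < n - 1 + 1) := by simpa using hab
        refine Or.inr ⟨b, by omega, ?_⟩
        have hc0 : c = 0 := by omega
        rw [hc0]
      · obtain ⟨hc, hb1, hb2⟩ : (c < 1 ∧ 2 ≤ b ∧ b < 1) := by simpa using hab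
        omega
    calc (Fam n r).card ≤ (insert ∅ ((range n).image (fun t => lset n 1 0 t))).card :=
          Finset.card_le_card hsub
      _ ≤ ((range n).image (fun t => lset n 1 0 t)).card + 1 := Finset.card_insert_le _ _
      _ ≤ (range n).card + 1 := Nat.add_le_add_right Finset.card_image_le 1
      _ ≤ r * (n - 1) + 2 := by rw [card_range, ← hr1]; omega
  · -- r ≥ 2
    have h1 : (Fam n r).card ≤ 2 + (((range r) ×ˢ (range (n - r + 1))).card +
        ((range r) ×ˢ (Ico 2 r)).card) := by
      refine le_trans (Finset.card_insert_le _ _) ?_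
      refine le_trans (Nat.add_le_add_right (Finset.card_insert_le _ _) 1) ?_
      have hu := Finset.card_union_le
        (((range r) ×ˢ (range (n - r + 1))).image (fun p => lset n r p.1 p.2))
        (((range r) ×ˢ (Ico 2 r)).image (fun p => uset n r p.1 p.2))
      have hL := Finset.card_image_le (s := (range r) ×ˢ (range (n - r + 1)))
        (f := fun p => lset n r p.1 p.2)
      have hU := Finset.card_image_le (s := (range r) ×ˢ (Ico 2 r))
        (f := fun p => uset n r p.1 p.2)
      omega
    rw [Finset.card_product, Finset.card_product, card_range, card_range, Nat.card_Ico] at h1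
    have h2 : r * (n - r + 1) + r * (r - 2) = r * (n - 1) := by
      rw [← Nat.mul_add]
      congr 1
      omega
    omega

lemma no_copy (P : Type*) [PartialOrder P] [Fintype P] {k : ℕ}
    (hcard : Fintype.card P = k) (hanti : ∀ a b : P, a ≤ b → a = b)
    (hr1 : 1 ≤ r) (hrk : r < k) : ¬ HasCopy P (Fam n r) := by
  rintro ⟨f, hinj, hmem, hiff⟩
  have hpair : ∀ p q : P, p ≠ q → ¬ f p ⊆ f q := fun p q hpq hsub =>
    hpq (hanti _ _ ((hiff p q).2 hsub))
  have hch : ∀ p, ∃ i, i < r ∧ InChain n r i (f p) := by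
    intro p
    obtain ⟨i, hi, hc⟩ := mem_Fam_chain (hmem p) hr1
    exact ⟨i, hi, hc⟩
  choose c hc1 hc2 using hch
  have hlt : Fintype.card (Fin r) < Fintype.card P := by
    rw [hcard, Fintype.card_fin]; omega
  obtain ⟨p, q, hpq, he⟩ :=
    Fintype.exists_ne_map_eq_of_card_lt (fun p => (⟨c p, hc1 p⟩ : Fin r)) hlt
  have hcc : c p = c q := by simpa using congrArg Fin.val he
  have h2q : InChain n r (c p) (f q) := by rw [hcc]; exact hc2 q
  rcases chain_total (hc1 p) (hc2 p) h2q with h | h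
  · exact hpair p q hpq h
  · exact hpair q p (Ne.symm hpq) h

lemma build_copy (P : Type*) [PartialOrder P] [Fintype P] {k : ℕ}
    (hcard : Fintype.card P = k) (hanti : ∀ a b : P, a ≤ b → a = b)
    (F : Finset (Finset (Fin n))) (S : Finset (Fin n)) (T : ℕ → Finset (Fin n))
    (hmem : ∀ j, j < k - 1 → T j ∈ F)
    (hpair : ∀ j j', j < k - 1 → j' < k - 1 → j ≠ j' → ¬ T j ⊆ T j')
    (hS1 : ∀ j, j < k - 1 → ¬ T j ⊆ S) (hS2 : ∀ j, j < k - 1 → ¬ S ⊆ T j) :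
    HasCopy P (insert S F) := by
  obtain ⟨e⟩ : Nonempty (P ≃ Fin k) := ⟨Fintype.equivFinOfCardEq hcard⟩
  set f : P → Finset (Fin n) := fun p => if (e p).val = 0 then S else T ((e p).val - 1)
    with hf
  have hC : ∀ p q : P, p ≠ q → ¬ f p ⊆ f q := by
    intro p q hpq
    have hne : (e p).val ≠ (e q).val := by
      intro h
      exact hpq (e.injective (Fin.val_injective h))
    have hpk : (e p).val < k := (e p).isLt
    have hqk : (e q).val < k := (e q).isLt
    simp only [hf]
    by_cases hp : (e p).val = 0 <;> by_cases hq : (e q).val = 0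
    · exact absurd (hp.trans hq.symm) hne
    · rw [if_pos hp, if_neg hq]; exact hS2 _ (by omega)
    · rw [if_neg hp, if_pos hq]; exact hS1 _ (by omega)
    · rw [if_neg hp, if_neg hq]; exact hpair _ _ (by omega) (by omega) (by omega)
  refine ⟨f, ?_, ?_, ?_⟩
  · intro p q hfpq
    by_contra hpq
    exact hC p q hpq (hfpq ▸ subset_rfl)
  · intro p
    simp only [hf]
    by_cases hp : (e p).val = 0
    · rw [if_pos hp]; exact mem_insert_self _ _
    · rw [if_neg hp]
      exact mem_insert_of_mem (hmem _ (by have := (e p).isLt; omega))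
  · intro p q
    constructor
    · intro hle; rw [hanti p q hle]
    · intro hsub
      by_cases hpq : p = q
      · rw [hpq]
      · exact absurd hsub (hC p q hpq)


lemma saturation (hr1 : 1 ≤ r) (hn : r + 2 ≤ n) (S : Finset (Fin n)) (hS : S ∉ Fam n r) :
    ∃ T : ℕ → Finset (Fin n), (∀ j, j < r → T j ∈ Fam n r) ∧
      (∀ j j', j < r → j' < r → j ≠ j' → ¬ T j ⊆ T j') ∧
      (∀ j, j < r → ¬ T j ⊆ S) ∧ (∀ j, j < r → ¬ S ⊆ T j) := by
  have hrn : r ≤ n := by omega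
  have hS0 : S ≠ ∅ := fun h => hS (h ▸ empty_mem_Fam)
  have hSu : S ≠ univ := fun h => hS (h ▸ univ_mem_Fam)
  set A := S.filter (fun x => x.val < r) with hA
  have hmemA : ∀ x : Fin n, x ∈ A ↔ x ∈ S ∧ x.val < r := fun x => mem_filter
  rcases Nat.lt_or_ge A.card 2 with hc2 | hc2
  · rcases Nat.lt_or_ge A.card 1 with hc1 | hc1
    · -- Case I : A empty
      have hA0 : A = ∅ := card_eq_zero.mp (by omega)
      have hnotin : ∀ x : Fin n, x ∈ S → r ≤ x.val := by
        intro x hx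
        by_contra h
        have hxA : x ∈ A := (hmemA x).2 ⟨hx, by omega⟩
        simp [hA0] at hxA
      refine ⟨fun j => lset n r j 0, ?_, ?_, ?_, ?_⟩
      · exact fun j hj => lset_mem_Fam hj (by omega)
      · exact fun j j' hj hj' hne => not_lset_subset hrn hj hj' hne
      · intro j hj hsub
        have hjmem : (⟨j, by omega⟩ : Fin n) ∈ lset n r j 0 := by rw [mem_lset]; simp
        have := hnotin _ (hsub hjmem)
        simp at this; omega
      · intro j hj hsub
        obtain ⟨w, hw⟩ := nonempty_iff_ne_empty.mpr hS0
        have h1 := hnotin w hw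
        have h2 := hsub hw
        rw [mem_lset] at h2
        omega
    · -- Case II : A = {v}
      have hA1 : A.card = 1 := by omega
      obtain ⟨v, hv⟩ := card_eq_one.mp hA1
      have hvS : v ∈ S ∧ v.val < r := (hmemA v).1 (by simp [hv])
      have huniq : ∀ x : Fin n, x ∈ S → x.val < r → x = v := by
        intro x hx hxr
        have hxA : x ∈ A := (hmemA x).2 ⟨hx, hxr⟩
        rw [hv] at hxA; simpa using hxA
      by_cases hD : ∀ x : Fin n, r ≤ x.val → x ∈ S
      · -- IIa : S is on a chain, contradiction
        exfalso
        apply hS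
        have hSeq : S = lset n r v.val (n - r) := by
          ext x
          rw [mem_lset]
          constructor
          · intro hx
            rcases Nat.lt_or_ge x.val r with h | h
            · exact Or.inl (by rw [huniq x hx h])
            · exact Or.inr ⟨h, by have := x.isLt; omega⟩
          · rintro (h | h)
            · have hxv : x = v := Fin.val_injective h
              rw [hxv]; exact hvS.1
            · exact hD x h.1
        rw [hSeq]
        exact lset_mem_Fam hvS.2 le_rfl
      · -- IIb
        push_neg at hD
        obtain ⟨cm, hcm1, hcm2⟩ := hD
        have hsplit : A.card + (S.filter (fun x => ¬ x.val < r)).card = S.card := by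
          rw [hA]
          exact card_filter_add_card_filter_not (p := fun x : Fin n => x.val < r) (s := S)
        have hBsub : S.filter (fun x => ¬ x.val < r) ⊆
            univ.filter (fun x : Fin n => r ≤ x.val) := by
          intro x hx; rw [mem_filter] at hx ⊢; exact ⟨mem_univ x, by omega⟩
        have hBcard : (S.filter (fun x => ¬ x.val < r)).card ≤ n - r :=
          le_trans (card_le_card hBsub) (le_of_eq (card_ge_r hrn))
        have ht0le : S.card - 1 ≤ n - r := by omega
        have hlc : (lset n r v.val (S.card - 1)).card = S.card := by
          rw [lset_card hvS.2 (by omega)]; omega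
        have hne : lset n r v.val (S.card - 1) ≠ S := by
          intro h; exact hS (h ▸ lset_mem_Fam hvS.2 ht0le)
        refine ⟨fun j => lset n r j (if j = v.val then S.card - 1 else 0), ?_, ?_, ?_, ?_⟩
        · intro j hj; exact lset_mem_Fam hj (by split_ifs <;> omega)
        · exact fun j j' hj hj' hnejj => not_lset_subset hrn hj hj' hnejj
        · intro j hj hsub
          dsimp only at hsub
          by_cases hjv : j = v.val
          · rw [if_pos hjv, hjv] at hsub
            exact hne (eq_of_subset_of_card_le hsub hlc.ge)
          · rw [if_neg hjv] at hsub
            have hjmem : (⟨j, by omega⟩ : Fin n) ∈ lset n r j 0 := by rw [mem_lset]; simp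
            have hv2 := huniq _ (hsub hjmem) (by simpa using hj)
            apply hjv
            have := congrArg Fin.val hv2
            simpa using this
        · intro j hj hsub
          dsimp only at hsub
          by_cases hjv : j = v.val
          · rw [if_pos hjv, hjv] at hsub
            exact hne (eq_of_subset_of_card_le hsub hlc.le).symm
          · rw [if_neg hjv] at hsub
            have h2 := hsub hvS.1
            rw [mem_lset] at h2
            have := hvS.2
            rcases h2 with h2 | h2
            · exact hjv h2.symm
            · omega
  · by_cases hD : ∀ x : Fin n, r ≤ x.val → x ∈ S
    · -- Case III
      have hAsub : A ⊆ univ.filter (fun x : Fin n => x.val < r) := by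
        intro x hx; rw [mem_filter]; exact ⟨mem_univ x, ((hmemA x).1 hx).2⟩
      have hcr : A.card ≤ r := by
        have h := card_le_card hAsub
        rwa [card_lt_r hrn] at h
      have hlt : A.card < r := by
        rcases eq_or_lt_of_le hcr with h | h
        · exfalso
          apply hSu
          have hAeq : A = univ.filter (fun x : Fin n => x.val < r) :=
            eq_of_subset_of_card_le hAsub (by rw [card_lt_r hrn, h])
          ext x; simp only [mem_univ, iff_true]
          rcases Nat.lt_or_ge x.val r with hx | hx
          · have hxA : x ∈ A := by rw [hAeq, mem_filter]; exact ⟨mem_univ x, hx⟩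
            exact ((hmemA x).1 hxA).1
          · exact hD x hx
        · exact h
      have hSc : S.card = A.card + (n - r) := by
        have h0 : A.card + (S.filter (fun x => ¬ x.val < r)).card = S.card := by
          rw [hA]
          exact card_filter_add_card_filter_not (p := fun x : Fin n => x.val < r) (s := S)
        have h1 : S.filter (fun x => ¬ x.val < r) =
            univ.filter (fun x : Fin n => r ≤ x.val) := by
          ext x; rw [mem_filter, mem_filter]
          constructor
          · rintro ⟨hx1, hx2⟩; exact ⟨mem_univ x, by omega⟩
          · rintro ⟨-, hx⟩; exact ⟨hD x hx, by omega⟩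
        rw [h1, card_ge_r hrn] at h0
        omega
      have hUc : ∀ j, j < r → (uset n r j A.card).card = A.card + (n - r) := fun j hj =>
        uset_card hj (by omega) (by omega) hrn
      refine ⟨fun j => uset n r j A.card, ?_, ?_, ?_, ?_⟩
      · exact fun j hj => uset_mem_Fam hj hc2 hlt
      · exact fun j j' hj hj' hne => not_uset_subset hrn hj hj' hne (by omega) hlt
      · intro j hj hsub
        dsimp only at hsub
        have heq := eq_of_subset_of_card_le hsub (by rw [hSc, hUc j hj])
        exact hS (heq ▸ uset_mem_Fam hj hc2 hlt)
      · intro j hj hsub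
        dsimp only at hsub
        have heq := eq_of_subset_of_card_le hsub (by rw [hSc, hUc j hj])
        have hmem := uset_mem_Fam (n := n) hj hc2 hlt
        rw [← heq] at hmem
        exact hS hmem
    · -- Case IV
      push_neg at hD
      obtain ⟨cm, hcm1, hcm2⟩ := hD
      have ht1le : cm.val - r + 1 ≤ n - r := by have := cm.isLt; omega
      refine ⟨fun j => lset n r j (if j ∈ S.image Fin.val then cm.val - r + 1 else 0),
        ?_, ?_, ?_, ?_⟩
      · intro j hj; exact lset_mem_Fam hj (by split_ifs <;> omega)
      · exact fun j j' hj hj' hne => not_lset_subset hrn hj hj' hne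
      · intro j hj hsub
        dsimp only at hsub
        by_cases hjim : j ∈ S.image Fin.val
        · rw [if_pos hjim] at hsub
          have hcmem : cm ∈ lset n r j (cm.val - r + 1) := by
            rw [mem_lset]; right; omega
          exact hcm2 (hsub hcmem)
        · rw [if_neg hjim] at hsub
          have hjmem : (⟨j, by omega⟩ : Fin n) ∈ lset n r j 0 := by rw [mem_lset]; simp
          exact hjim (mem_image.mpr ⟨_, hsub hjmem, rfl⟩)
      · intro j hj hsub
        dsimp only at hsub
        by_cases hjim : j ∈ S.image Fin.val
        · rw [if_pos hjim] at hsub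
          obtain ⟨x, hxS, hxj⟩ := mem_image.mp hjim
          have hxA : x ∈ A := (hmemA x).2 ⟨hxS, by rw [hxj]; exact hj⟩
          obtain ⟨w, hwA, hwx⟩ := exists_mem_ne (s := A) (by omega) x
          have hw := (hmemA w).1 hwA
          have h3 := hsub hw.1
          rw [mem_lset] at h3
          have hwj : w.val ≠ j := by
            intro h
            exact hwx (Fin.val_injective (by rw [h, hxj]))
          have hwr := hw.2
          omega
        · rw [if_neg hjim] at hsub
          have hAne : A.Nonempty := card_pos.mp (by omega)
          obtain ⟨w, hwA⟩ := hAne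
          have hw := (hmemA w).1 hwA
          have h2 := hsub hw.1
          rw [mem_lset] at h2
          rcases h2 with h2 | h2
          · exact hjim (mem_image.mpr ⟨w, hw.1, h2⟩)
          · have := hw.2; omega

end AnticSat

/-- For every `k ≥ 2` there is `n₀` such that for all `n ≥ n₀`, the induced
saturation number of the antichain `A_k` on `k` elements (a poset of size `k`
with no two distinct elements comparable) satisfies
`sat*(n, A_k) ≤ (k − 1)(n − 1) + 2`. -/
theorem sat_antichain_upper (k : ℕ) (hk : 2 ≤ k) (P : Type*) [PartialOrder P] [Fintype P]
    (hcard : Fintype.card P = k) (hanti : ∀ a b : P, a ≤ b → a = b) :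
    ∃ n₀ : ℕ, ∀ n : ℕ, n₀ ≤ n → satNum n P ≤ (k - 1) * (n - 1) + 2 := by
  refine ⟨k + 2, fun n hn => ?_⟩
  have hr1 : 1 ≤ k - 1 := by omega
  have hrn : (k - 1) + 2 ≤ n := by omega
  have hsat : IsSat P (AnticSat.Fam n (k - 1)) := by
    constructor
    · exact AnticSat.no_copy P hcard hanti hr1 (by omega)
    · intro S hS
      obtain ⟨T, h1, h2, h3, h4⟩ := AnticSat.saturation hr1 hrn S hS
      exact AnticSat.build_copy P hcard hanti _ S T h1 h2 h3 h4
  calc satNum n P ≤ (AnticSat.Fam n (k - 1)).card := Nat.sInf_le ⟨_, hsat, rfl⟩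
    _ ≤ (k - 1) * (n - 1) + 2 := AnticSat.Fam_card hr1 (by omega)
end
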